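/- arXiv:2604.04985 — 4 statements merged into one kernel-verified Lean document; each statement's English description precedes it below -/
import Mathlib

section
/- For every n ≥ 3, the graphs S(C_n), R(C_n) and Q(C_n) obtained from the cycle C_n on n vertices are dispersable: mbt(S(C_n)) = Δ(S(C_n)) = 2, mbt(R(C_n)) = Δ(R(C_n)) = 4, and mbt(Q(C_n)) = Δ(Q(C_n)) = 4. -/
open SimpleGraph

/-- Degree of a vertex. -/
noncomputable def deg {V : Type*} (G : SimpleGraph V) (v : V) : ℕ :=
  (G.neighborSet v).ncard

/-- Maximum degree Δ(G) of a finite simple graph. -/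
noncomputable def maxDeg {V : Type*} [Fintype V] (G : SimpleGraph V) : ℕ :=
  Finset.univ.sup (deg G)

/-- `IsMBE G k f page` : the linear order on vertices given by the injection `f : V → ℕ`
together with the page assignment `page` is a matching book embedding of `G` on `k` pages:
every edge gets a page `< k`, no two edges on a common page cross, and every vertex is
incident to at most one edge on each page. -/
def IsMBE {V : Type*} (G : SimpleGraph V) (k : ℕ) (f : V → ℕ) (page : Sym2 V → ℕ) : Prop :=
  Function.Injective f ∧
  (∀ u v, G.Adj u v → page s(u, v) < k) ∧
  (∀ u v x y, G.Adj u v → G.Adj x y → page s(u, v) = page s(x, y) →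
    ¬(f u < f x ∧ f x < f v ∧ f v < f y)) ∧
  (∀ u v w, G.Adj u v → G.Adj u w → v ≠ w → page s(u, v) ≠ page s(u, w))

/-- The matching book thickness of `G`: the least number of pages admitting a
matching book embedding. -/
noncomputable def mbt {V : Type*} (G : SimpleGraph V) : ℕ :=
  sInf {k | ∃ f page, IsMBE G k f page}

/-- A graph is outerplanar iff it has a one-page book embedding: a linear order of
its vertices (an injection into `ℕ`) in which no two edges cross. -/
def IsOuterplanar {V : Type*} (G : SimpleGraph V) : Prop :=
  ∃ f : V → ℕ, Function.Injective f ∧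
    ∀ u v x y, G.Adj u v → G.Adj x y → ¬(f u < f x ∧ f x < f v ∧ f v < f y)

/-- The derived graph of `G` on vertex set `V(G) ⊕ E(G)`. Black–white edges
(`u`–`(uv)` for `u` an endpoint of the edge `uv`) are always present; `black` indicates
whether the original edges of `G` are retained, and `white` indicates whether two edge
vertices corresponding to adjacent edges of `G` (distinct edges sharing an endpoint)
are joined. -/
def derivedG {V : Type*} (G : SimpleGraph V) (black white : Bool) :
    SimpleGraph (V ⊕ G.edgeSet) where
  Adj x y :=
    match x, y with
    | Sum.inl u, Sum.inl v => black = true ∧ G.Adj u v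
    | Sum.inl u, Sum.inr e => u ∈ (e : Sym2 V)
    | Sum.inr e, Sum.inl u => u ∈ (e : Sym2 V)
    | Sum.inr e, Sum.inr f =>
        white = true ∧ e ≠ f ∧ ∃ w, w ∈ (e : Sym2 V) ∧ w ∈ (f : Sym2 V)
  symm := by
    constructor
    rintro (u | e) (v | f) h
    · exact ⟨h.1, h.2.symm⟩
    · exact h
    · exact h
    · obtain ⟨hw, hne, w, h1, h2⟩ := h
      exact ⟨hw, hne.symm, w, h2, h1⟩
  loopless := by
    constructor
    rintro (u | e) h
    · exact G.loopless.irrefl u h.2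
    · exact h.2.1 rfl

/-- The four graph operations `S`, `R`, `Q`, `T`. -/
inductive FOp : Type
  | S | R | Q | T
  deriving DecidableEq

/-- Whether the operation retains the original (black–black) edges of `G`. -/
def FOp.black : FOp → Bool
  | .R => true
  | .T => true
  | _ => false

/-- Whether the operation joins edge (white) vertices of adjacent edges. -/
def FOp.white : FOp → Bool
  | .Q => true
  | .T => true
  | _ => false

/-- `FGraph F G` is the graph `F(G)` for `F ∈ {S, R, Q, T}`. -/
def FGraph (F : FOp) {V : Type*} (G : SimpleGraph V) : SimpleGraph (V ⊕ G.edgeSet) :=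
  derivedG G F.black F.white

/-- The `F`-sum `G +_F H`: vertex set `(V(G) ∪ E(G)) × V(H)`; `(u₁, u₂)` and `(v₁, v₂)`
are adjacent iff `u₁ = v₁ ∈ V(G)` and `u₂v₂ ∈ E(H)`, or `u₂ = v₂` and
`u₁v₁ ∈ E(F(G))`. -/
def FSum (F : FOp) {V W : Type*} (G : SimpleGraph V) (H : SimpleGraph W) :
    SimpleGraph ((V ⊕ G.edgeSet) × W) where
  Adj x y :=
    (x.1 = y.1 ∧ (∃ u : V, x.1 = Sum.inl u) ∧ H.Adj x.2 y.2) ∨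
    (x.2 = y.2 ∧ (FGraph F G).Adj x.1 y.1)
  symm := by
    constructor
    rintro ⟨a, b⟩ ⟨c, d⟩ (⟨h1, h2, h3⟩ | ⟨h1, h2⟩)
    · exact Or.inl ⟨h1.symm, h1 ▸ h2, h3.symm⟩
    · exact Or.inr ⟨h1.symm, h2.symm⟩
  loopless := by
    constructor
    rintro ⟨a, b⟩ (⟨-, -, h⟩ | ⟨-, h⟩)
    · exact H.loopless.irrefl b h
    · exact (FGraph F G).loopless.irrefl a h

/-- The path graph `P_n` on `n` vertices. -/
def pathG (n : ℕ) : SimpleGraph (Fin n) where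
  Adj i j := (i : ℕ) + 1 = (j : ℕ) ∨ (j : ℕ) + 1 = (i : ℕ)
  symm := by constructor; intro i j h; tauto
  loopless := by constructor; intro i h; omega

instance (n : ℕ) : DecidableRel (pathG n).Adj := fun i j =>
  inferInstanceAs (Decidable (_ ∨ _))

/-- The cycle graph `C_n` on `n` vertices (intended for `n ≥ 3`). -/
def cycleG (n : ℕ) : SimpleGraph (Fin n) where
  Adj i j := i ≠ j ∧ (((i : ℕ) + 1) % n = (j : ℕ) ∨ ((j : ℕ) + 1) % n = (i : ℕ))
  symm := by constructor; intro i j h; tauto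
  loopless := by constructor; intro i h; exact h.1 rfl

instance (n : ℕ) : DecidableRel (cycleG n).Adj := fun i j =>
  inferInstanceAs (Decidable (_ ∧ _))

/-- The star graph `S_n = K_{1,n}` on `n + 1` vertices: vertex `0` is the center. -/
def starG (n : ℕ) : SimpleGraph (Fin (n + 1)) where
  Adj i j := i ≠ j ∧ (i = 0 ∨ j = 0)
  symm := by constructor; intro i j h; tauto
  loopless := by constructor; intro i h; exact h.1 rfl

instance (n : ℕ) : DecidableRel (starG n).Adj := fun i j =>
  inferInstanceAs (Decidable (_ ∧ _))

/-- The circulant graph `C(ℤ_m, {1, 2})`: vertices `0, …, m - 1`, with `i` adjacent to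
`j` iff `i - j ≡ ±1` or `±2 (mod m)`. -/
def circulantG12 (m : ℕ) : SimpleGraph (Fin m) where
  Adj i j := i ≠ j ∧
    (((i : ℕ) + 1) % m = (j : ℕ) ∨ ((i : ℕ) + 2) % m = (j : ℕ) ∨
     ((j : ℕ) + 1) % m = (i : ℕ) ∨ ((j : ℕ) + 2) % m = (i : ℕ))
  symm := by constructor; intro i j h; tauto
  loopless := by constructor; intro i h; exact h.1 rfl

namespace SRQaux

lemma mod2 {n : ℕ} (a : ℕ) (h : a < 2*n) :
    (a < n ∧ a % n = a) ∨ (n ≤ a ∧ a % n = a - n) := by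
  rcases lt_or_ge a n with h1 | h1
  · exact Or.inl ⟨h1, Nat.mod_eq_of_lt h1⟩
  · refine Or.inr ⟨h1, ?_⟩
    rw [Nat.mod_eq_sub_mod h1]
    exact Nat.mod_eq_of_lt (by omega)

variable {n : ℕ}

/-- The `j`-th edge of the cycle. -/
def E (hn : 3 ≤ n) (j : ℕ) (hj : j < n) : (cycleG n).edgeSet :=
  ⟨s(⟨j, hj⟩, ⟨(j+1) % n, Nat.mod_lt _ (by omega)⟩), by
    rw [SimpleGraph.mem_edgeSet]
    refine ⟨?_, Or.inl rfl⟩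
    have h2 := mod2 (n := n) (j+1) (by omega)
    simp only [ne_eq, Fin.mk.injEq]
    omega⟩

noncomputable def gVal (e : (cycleG n).edgeSet) : ℕ :=
  sInf {j : ℕ | ∃ hj : j < n, e.val = s(⟨j, hj⟩, ⟨(j+1) % n, Nat.mod_lt _ (by omega)⟩)}

lemma rep_nonempty (hn : 3 ≤ n) (e : (cycleG n).edgeSet) :
    {j : ℕ | ∃ hj : j < n, e.val = s(⟨j, hj⟩, ⟨(j+1) % n, Nat.mod_lt _ (by omega)⟩)}.Nonempty := by
  obtain ⟨v, hv⟩ := e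
  induction v using Sym2.inductionOn with
  | hf a b =>
    rw [SimpleGraph.mem_edgeSet] at hv
    obtain ⟨hne, hor | hor⟩ := hv
    · refine ⟨(a : ℕ), a.isLt, ?_⟩
      have hb : (⟨((a:ℕ)+1) % n, Nat.mod_lt _ (by omega)⟩ : Fin n) = b := Fin.ext hor
      simp only [hb]
    · refine ⟨(b : ℕ), b.isLt, ?_⟩
      have ha : (⟨((b:ℕ)+1) % n, Nat.mod_lt _ (by omega)⟩ : Fin n) = a := Fin.ext hor
      simp only [ha]
      exact Sym2.eq_swap

lemma gVal_spec (hn : 3 ≤ n) (e : (cycleG n).edgeSet) :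
    ∃ hj : gVal e < n, e.val = s(⟨gVal e, hj⟩, ⟨(gVal e + 1) % n, Nat.mod_lt _ (by omega)⟩) :=
  Nat.sInf_mem (rep_nonempty hn e)

lemma gVal_lt (hn : 3 ≤ n) (e : (cycleG n).edgeSet) : gVal e < n := by
  obtain ⟨h, -⟩ := gVal_spec hn e; exact h

lemma gVal_eq (hn : 3 ≤ n) (e : (cycleG n).edgeSet) {j : ℕ} (hj : j < n)
    (hrep : e.val = s(⟨j, hj⟩, ⟨(j+1) % n, Nat.mod_lt _ (by omega)⟩)) : gVal e = j := by
  obtain ⟨h1, h2⟩ := gVal_spec hn e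
  rw [hrep] at h2
  rw [Sym2.eq_iff] at h2
  have m1 := mod2 (n := n) (j+1) (by omega)
  have m2 := mod2 (n := n) (gVal e + 1) (by omega)
  simp only [Fin.mk.injEq] at h2
  omega

lemma gVal_E (hn : 3 ≤ n) (j : ℕ) (hj : j < n) : gVal (E hn j hj) = j :=
  gVal_eq hn _ hj rfl

lemma gVal_inj (hn : 3 ≤ n) {e f : (cycleG n).edgeSet} (h : gVal e = gVal f) : e = f := by
  obtain ⟨h1, h2⟩ := gVal_spec hn e
  obtain ⟨h3, h4⟩ := gVal_spec hn f
  apply Subtype.ext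
  rw [h2, h4]
  simp only [Fin.mk.injEq, Sym2.eq_iff]
  exact Or.inl ⟨h, by rw [h]⟩

lemma eq_E_iff (hn : 3 ≤ n) (e : (cycleG n).edgeSet) (j : ℕ) (hj : j < n) :
    e = E hn j hj ↔ gVal e = j := by
  constructor
  · rintro rfl; exact gVal_E hn j hj
  · intro h; exact gVal_inj hn (h.trans (gVal_E hn j hj).symm)

lemma mem_iff (hn : 3 ≤ n) (e : (cycleG n).edgeSet) (i : Fin n) :
    i ∈ e.val ↔ ((i:ℕ) = gVal e ∨ (i:ℕ) = (gVal e + 1) % n) := by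
  obtain ⟨h1, h2⟩ := gVal_spec hn e
  rw [h2, Sym2.mem_iff, Fin.ext_iff, Fin.ext_iff]

/-- The vertex ordering. -/
noncomputable def fV : (Fin n) ⊕ (cycleG n).edgeSet → ℕ
  | Sum.inl i => 2 * (i : ℕ)
  | Sum.inr e => 2 * gVal e + 1

lemma fV_lt (hn : 3 ≤ n) (x : (Fin n) ⊕ (cycleG n).edgeSet) : fV x < 2 * n := by
  rcases x with i | e
  · have := i.isLt; simp only [fV]; omega
  · have := gVal_lt hn e; simp only [fV]; omega

lemma fV_inj (hn : 3 ≤ n) : Function.Injective (fV (n := n)) := by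
  rintro (i | e) (j | f) h <;> simp only [fV] at h
  · exact congrArg Sum.inl (Fin.ext (by omega))
  · omega
  · omega
  · exact congrArg Sum.inr (gVal_inj hn (by omega))

end SRQaux
namespace SRQaux

variable {n : ℕ}


/-- Page assignment for R(C_n) and Q(C_n). -/
def pOf (n a b : ℕ) : ℕ :=
  if max a b = min a b + 1 then
    (if min a b = 0 then 3 else if min a b = 2*n-2 then 3 - n % 2 else min a b % 2)
  else if max a b = min a b + 2 then 2 + (min a b / 2) % 2
  else if min a b = 0 ∧ max a b = 2*n-1 then 1 else 0

/-- Page assignment for S(C_n). -/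
def pOfS (n a b : ℕ) : ℕ :=
  if min a b = 0 ∧ max a b = 2*n-1 then 1 else min a b % 2

lemma pOf_comm (n a b : ℕ) : pOf n a b = pOf n b a := by
  simp only [pOf]
  rw [Nat.max_comm a b, Nat.min_comm a b]

lemma pOfS_comm (n a b : ℕ) : pOfS n a b = pOfS n b a := by
  simp only [pOfS]
  rw [Nat.max_comm a b, Nat.min_comm a b]

lemma pOf_lt (n a b : ℕ) : pOf n a b < 4 := by
  simp only [pOf]; split_ifs <;> omega

lemma pOfS_lt (n a b : ℕ) : pOfS n a b < 2 := by
  simp only [pOfS]; split_ifs <;> omega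

/-- characterisation of the edges of R(C_n) in terms of vertex positions -/
def ERp (n a b : ℕ) : Prop :=
  (b = a+1 ∧ b ≤ 2*n-1) ∨ (a = b+1 ∧ a ≤ 2*n-1) ∨
  (b = a+2 ∧ a % 2 = 0 ∧ b ≤ 2*n-2) ∨ (a = b+2 ∧ b % 2 = 0 ∧ a ≤ 2*n-2) ∨
  (a = 0 ∧ b = 2*n-2) ∨ (b = 0 ∧ a = 2*n-2) ∨
  (a = 0 ∧ b = 2*n-1) ∨ (b = 0 ∧ a = 2*n-1)

/-- characterisation of the edges of Q(C_n) in terms of vertex positions -/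
def EQp (n a b : ℕ) : Prop :=
  (b = a+1 ∧ b ≤ 2*n-1) ∨ (a = b+1 ∧ a ≤ 2*n-1) ∨
  (b = a+2 ∧ a % 2 = 1 ∧ b ≤ 2*n-1) ∨ (a = b+2 ∧ b % 2 = 1 ∧ a ≤ 2*n-1) ∨
  (a = 1 ∧ b = 2*n-1) ∨ (b = 1 ∧ a = 2*n-1) ∨
  (a = 0 ∧ b = 2*n-1) ∨ (b = 0 ∧ a = 2*n-1)

/-- characterisation of the edges of S(C_n) in terms of vertex positions -/
def ESp (n a b : ℕ) : Prop :=
  (b = a+1 ∧ b ≤ 2*n-1) ∨ (a = b+1 ∧ a ≤ 2*n-1) ∨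
  (a = 0 ∧ b = 2*n-1) ∨ (b = 0 ∧ a = 2*n-1)

lemma noncross_R (hn : 3 ≤ n) {a b c d : ℕ} (h1 : ERp n a b) (h2 : ERp n c d) :
    ¬(a < c ∧ c < b ∧ b < d) := by
  unfold ERp at h1 h2; omega

lemma noncross_Q (hn : 3 ≤ n) {a b c d : ℕ} (h1 : EQp n a b) (h2 : EQp n c d) :
    ¬(a < c ∧ c < b ∧ b < d) := by
  unfold EQp at h1 h2; omega

lemma noncross_S (hn : 3 ≤ n) {a b c d : ℕ} (h1 : ESp n a b) (h2 : ESp n c d) :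
    ¬(a < c ∧ c < b ∧ b < d) := by
  unfold ESp at h1 h2; omega

lemma match_R (hn : 3 ≤ n) {a b c : ℕ} (h1 : ERp n a b) (h2 : ERp n a c) (h : b ≠ c) :
    pOf n a b ≠ pOf n a c := by
  unfold ERp at h1 h2
  simp only [pOf]
  split_ifs <;> omega

lemma match_Q (hn : 3 ≤ n) {a b c : ℕ} (h1 : EQp n a b) (h2 : EQp n a c) (h : b ≠ c) :
    pOf n a b ≠ pOf n a c := by
  unfold EQp at h1 h2
  simp only [pOf]
  split_ifs <;> omega

lemma match_S (hn : 3 ≤ n) {a b c : ℕ} (h1 : ESp n a b) (h2 : ESp n a c) (h : b ≠ c) :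
    pOfS n a b ≠ pOfS n a c := by
  unfold ESp at h1 h2
  simp only [pOfS]
  split_ifs <;> omega

end SRQaux
namespace SRQaux

variable {n : ℕ}

lemma val_ne {i j : Fin n} (h : i ≠ j) : (i : ℕ) ≠ (j : ℕ) :=
  fun hh => h (Fin.ext hh)

lemma ESp_comm {a b : ℕ} (h : ESp n a b) : ESp n b a := by
  unfold ESp at h ⊢
  rcases h with h | h | h | h
  exacts [Or.inr (Or.inl h), Or.inl h, Or.inr (Or.inr (Or.inr h)), Or.inr (Or.inr (Or.inl h))]

lemma ESp_ERp {a b : ℕ} (h : ESp n a b) : ERp n a b := by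
  unfold ESp at h; unfold ERp
  rcases h with h | h | h | h
  exacts [Or.inl h, Or.inr (Or.inl h),
    Or.inr (Or.inr (Or.inr (Or.inr (Or.inr (Or.inr (Or.inl h)))))),
    Or.inr (Or.inr (Or.inr (Or.inr (Or.inr (Or.inr (Or.inr h))))))]

lemma ESp_EQp {a b : ℕ} (h : ESp n a b) : EQp n a b := by
  unfold ESp at h; unfold EQp
  rcases h with h | h | h | h
  exacts [Or.inl h, Or.inr (Or.inl h),
    Or.inr (Or.inr (Or.inr (Or.inr (Or.inr (Or.inr (Or.inl h)))))),
    Or.inr (Or.inr (Or.inr (Or.inr (Or.inr (Or.inr (Or.inr h))))))]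

lemma char_inl_inr (hn : 3 ≤ n) (i : Fin n) (e : (cycleG n).edgeSet)
    (h : (i : Fin n) ∈ e.val) : ESp n (fV (Sum.inl i)) (fV (Sum.inr e)) := by
  have hm := (mem_iff hn e i).mp h
  have hg := gVal_lt hn e
  have hi := i.isLt
  simp only [fV]
  unfold ESp
  rcases hm with hm | hm
  · exact Or.inl ⟨by omega, by omega⟩
  · rcases mod2 (n := n) (gVal e + 1) (by omega) with ⟨h1, h2⟩ | ⟨h1, h2⟩
    · exact Or.inr (Or.inl ⟨by omega, by omega⟩)
    · exact Or.inr (Or.inr (Or.inl ⟨by omega, by omega⟩))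

lemma char_S (hn : 3 ≤ n) {u v : Fin n ⊕ (cycleG n).edgeSet}
    (h : (FGraph .S (cycleG n)).Adj u v) : ESp n (fV u) (fV v) := by
  rcases u with i | e <;> rcases v with j | f
  · obtain ⟨hb, -⟩ := h; simp [FOp.black] at hb
  · exact char_inl_inr hn i f h
  · exact ESp_comm (char_inl_inr hn j e h)
  · obtain ⟨hw, -⟩ := h; simp [FOp.white] at hw

lemma char_R (hn : 3 ≤ n) {u v : Fin n ⊕ (cycleG n).edgeSet}
    (h : (FGraph .R (cycleG n)).Adj u v) : ERp n (fV u) (fV v) := by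
  rcases u with i | e <;> rcases v with j | f
  · obtain ⟨-, hne, hor⟩ := h
    have hi := i.isLt
    have hj := j.isLt
    have hne' := val_ne hne
    simp only [fV]
    unfold ERp
    rcases hor with hor | hor
    · rcases mod2 (n := n) ((i:ℕ)+1) (by omega) with ⟨h1, h2⟩ | ⟨h1, h2⟩
      · exact Or.inr (Or.inr (Or.inl ⟨by omega, by omega, by omega⟩))
      · exact Or.inr (Or.inr (Or.inr (Or.inr (Or.inr (Or.inl ⟨by omega, by omega⟩)))))
    · rcases mod2 (n := n) ((j:ℕ)+1) (by omega) with ⟨h1, h2⟩ | ⟨h1, h2⟩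
      · exact Or.inr (Or.inr (Or.inr (Or.inl ⟨by omega, by omega, by omega⟩)))
      · exact Or.inr (Or.inr (Or.inr (Or.inr (Or.inl ⟨by omega, by omega⟩))))
  · exact ESp_ERp (char_inl_inr hn i f h)
  · exact ESp_ERp (ESp_comm (char_inl_inr hn j e h))
  · obtain ⟨hw, -⟩ := h; simp [FOp.white] at hw

lemma char_Q (hn : 3 ≤ n) {u v : Fin n ⊕ (cycleG n).edgeSet}
    (h : (FGraph .Q (cycleG n)).Adj u v) : EQp n (fV u) (fV v) := by
  rcases u with i | e <;> rcases v with j | f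
  · obtain ⟨hb, -⟩ := h; simp [FOp.black] at hb
  · exact ESp_EQp (char_inl_inr hn i f h)
  · exact ESp_EQp (ESp_comm (char_inl_inr hn j e h))
  · obtain ⟨-, hne, w, hw1, hw2⟩ := h
    have hge := gVal_lt hn e
    have hgf := gVal_lt hn f
    have hne' : gVal e ≠ gVal f := fun hh => hne (gVal_inj hn hh)
    have hm1 := (mem_iff hn e w).mp hw1
    have hm2 := (mem_iff hn f w).mp hw2
    have hwlt := w.isLt
    simp only [fV]
    unfold EQp
    rcases hm1 with hm1 | hm1 <;> rcases hm2 with hm2 | hm2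
    · omega
    · rcases mod2 (n := n) (gVal f + 1) (by omega) with ⟨h1, h2⟩ | ⟨h1, h2⟩
      · exact Or.inr (Or.inr (Or.inr (Or.inl ⟨by omega, by omega, by omega⟩)))
      · exact Or.inr (Or.inr (Or.inr (Or.inr (Or.inl ⟨by omega, by omega⟩))))
    · rcases mod2 (n := n) (gVal e + 1) (by omega) with ⟨h1, h2⟩ | ⟨h1, h2⟩
      · exact Or.inr (Or.inr (Or.inl ⟨by omega, by omega, by omega⟩))
      · exact Or.inr (Or.inr (Or.inr (Or.inr (Or.inr (Or.inl ⟨by omega, by omega⟩)))))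
    · rcases mod2 (n := n) (gVal e + 1) (by omega) with ⟨h1, h2⟩ | ⟨h1, h2⟩ <;>
        rcases mod2 (n := n) (gVal f + 1) (by omega) with ⟨h3, h4⟩ | ⟨h3, h4⟩ <;> omega

end SRQaux
namespace SRQaux

variable {n : ℕ}

noncomputable def pageRQ : Sym2 (Fin n ⊕ (cycleG n).edgeSet) → ℕ :=
  Sym2.lift ⟨fun u v => pOf n (fV u) (fV v), fun u v => pOf_comm n (fV u) (fV v)⟩

noncomputable def pageS : Sym2 (Fin n ⊕ (cycleG n).edgeSet) → ℕ :=
  Sym2.lift ⟨fun u v => pOfS n (fV u) (fV v), fun u v => pOfS_comm n (fV u) (fV v)⟩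

lemma pageRQ_mk (u v : Fin n ⊕ (cycleG n).edgeSet) :
    pageRQ s(u, v) = pOf n (fV u) (fV v) := rfl

lemma pageS_mk (u v : Fin n ⊕ (cycleG n).edgeSet) :
    pageS s(u, v) = pOfS n (fV u) (fV v) := rfl

lemma isMBE_S (hn : 3 ≤ n) : IsMBE (FGraph .S (cycleG n)) 2 fV pageS := by
  refine ⟨fV_inj hn, ?_, ?_, ?_⟩
  · intro u v _; rw [pageS_mk]; exact pOfS_lt n _ _
  · intro u v x y h1 h2 _
    exact noncross_S hn (char_S hn h1) (char_S hn h2)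
  · intro u v w h1 h2 hvw
    rw [pageS_mk, pageS_mk]
    exact match_S hn (char_S hn h1) (char_S hn h2) (fun hh => hvw (fV_inj hn hh))

lemma isMBE_R (hn : 3 ≤ n) : IsMBE (FGraph .R (cycleG n)) 4 fV pageRQ := by
  refine ⟨fV_inj hn, ?_, ?_, ?_⟩
  · intro u v _; rw [pageRQ_mk]; exact pOf_lt n _ _
  · intro u v x y h1 h2 _
    exact noncross_R hn (char_R hn h1) (char_R hn h2)
  · intro u v w h1 h2 hvw
    rw [pageRQ_mk, pageRQ_mk]
    exact match_R hn (char_R hn h1) (char_R hn h2) (fun hh => hvw (fV_inj hn hh))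

lemma isMBE_Q (hn : 3 ≤ n) : IsMBE (FGraph .Q (cycleG n)) 4 fV pageRQ := by
  refine ⟨fV_inj hn, ?_, ?_, ?_⟩
  · intro u v _; rw [pageRQ_mk]; exact pOf_lt n _ _
  · intro u v x y h1 h2 _
    exact noncross_Q hn (char_Q hn h1) (char_Q hn h2)
  · intro u v w h1 h2 hvw
    rw [pageRQ_mk, pageRQ_mk]
    exact match_Q hn (char_Q hn h1) (char_Q hn h2) (fun hh => hvw (fV_inj hn hh))

end SRQaux
namespace SRQaux

variable {n : ℕ}

lemma fin_val_mk {a : ℕ} {h : a < n} : ((⟨a, h⟩ : Fin n) : ℕ) = a := rfl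

lemma E_inj (hn : 3 ≤ n) {a b : ℕ} {ha : a < n} {hb : b < n}
    (h : E hn a ha = E hn b hb) : a = b := by
  have := congrArg gVal h
  rwa [gVal_E, gVal_E] at this

lemma nbhd_inl (hn : 3 ≤ n) (F : FOp) (hb : F.black = false) (i : Fin n) :
    (FGraph F (cycleG n)).neighborSet (Sum.inl i) =
      {Sum.inr (E hn (i : ℕ) i.isLt),
       Sum.inr (E hn (((i : ℕ) + n - 1) % n) (Nat.mod_lt _ (by omega)))} := by
  ext x
  simp only [SimpleGraph.mem_neighborSet, Set.mem_insert_iff, Set.mem_singleton_iff]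
  rcases x with j | e
  · constructor
    · rintro ⟨hbt, -⟩
      rw [hb] at hbt
      cases hbt
    · rintro (h | h) <;> exact absurd h (by simp)
  · simp only [Sum.inr.injEq]
    rw [show ((FGraph F (cycleG n)).Adj (Sum.inl i) (Sum.inr e)) = ((i : Fin n) ∈ e.val) from rfl]
    rw [mem_iff hn e i, eq_E_iff hn e _ _, eq_E_iff hn e _ _]
    have hg := gVal_lt hn e
    have hi := i.isLt
    have m1 := mod2 (n := n) (gVal e + 1) (by omega)
    have m2 := mod2 (n := n) ((i : ℕ) + n - 1) (by omega)
    constructor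
    · intro h; omega
    · intro h; omega

lemma nbhd_inr (hn : 3 ≤ n) (F : FOp) (hw : F.white = false) (e : (cycleG n).edgeSet) :
    (FGraph F (cycleG n)).neighborSet (Sum.inr e) =
      {Sum.inl ⟨gVal e, gVal_lt hn e⟩,
       Sum.inl ⟨(gVal e + 1) % n, Nat.mod_lt _ (by omega)⟩} := by
  ext x
  simp only [SimpleGraph.mem_neighborSet, Set.mem_insert_iff, Set.mem_singleton_iff]
  rcases x with j | f
  · simp only [Sum.inl.injEq, Fin.ext_iff, fin_val_mk]
    rw [show ((FGraph F (cycleG n)).Adj (Sum.inr e) (Sum.inl j)) = ((j : Fin n) ∈ e.val) from rfl]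
    rw [mem_iff hn e j]
  · constructor
    · rintro ⟨hwt, -⟩
      rw [hw] at hwt
      cases hwt
    · rintro (h | h) <;> exact absurd h (by simp)

lemma deg_inl (hn : 3 ≤ n) (F : FOp) (hb : F.black = false) (i : Fin n) :
    deg (FGraph F (cycleG n)) (Sum.inl i) = 2 := by
  unfold deg
  rw [nbhd_inl hn F hb i]
  apply Set.ncard_pair
  simp only [ne_eq, Sum.inr.injEq]
  intro h
  have h2 := E_inj hn h
  have hi := i.isLt
  have m2 := mod2 (n := n) ((i : ℕ) + n - 1) (by omega)
  omega

lemma deg_inr (hn : 3 ≤ n) (F : FOp) (hw : F.white = false) (e : (cycleG n).edgeSet) :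
    deg (FGraph F (cycleG n)) (Sum.inr e) = 2 := by
  unfold deg
  rw [nbhd_inr hn F hw e]
  apply Set.ncard_pair
  simp only [ne_eq, Sum.inl.injEq, Fin.mk.injEq]
  have hg := gVal_lt hn e
  have m1 := mod2 (n := n) (gVal e + 1) (by omega)
  omega

lemma nbhd_R_inl (hn : 3 ≤ n) (i : Fin n) :
    (FGraph .R (cycleG n)).neighborSet (Sum.inl i) =
      {Sum.inl ⟨((i : ℕ) + 1) % n, Nat.mod_lt _ (by omega)⟩,
       Sum.inl ⟨((i : ℕ) + n - 1) % n, Nat.mod_lt _ (by omega)⟩,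
       Sum.inr (E hn (i : ℕ) i.isLt),
       Sum.inr (E hn (((i : ℕ) + n - 1) % n) (Nat.mod_lt _ (by omega)))} := by
  ext x
  simp only [SimpleGraph.mem_neighborSet, Set.mem_insert_iff, Set.mem_singleton_iff]
  rcases x with j | e
  · simp only [Sum.inl.injEq, Fin.ext_iff, fin_val_mk]
    have hi := i.isLt
    have hj := j.isLt
    have m1 := mod2 (n := n) ((i : ℕ) + 1) (by omega)
    have m2 := mod2 (n := n) ((i : ℕ) + n - 1) (by omega)
    have m3 := mod2 (n := n) ((j : ℕ) + 1) (by omega)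
    constructor
    · rintro ⟨-, hne, hor⟩
      have hne' := val_ne hne
      rcases hor with h | h
      · exact Or.inl (by omega)
      · exact Or.inr (Or.inl (by omega))
    · rintro (h | h | h | h)
      · refine ⟨rfl, ?_, Or.inl (by omega)⟩
        rw [Ne, Fin.ext_iff]; omega
      · refine ⟨rfl, ?_, Or.inr (by omega)⟩
        rw [Ne, Fin.ext_iff]; omega
      · exact absurd h (by simp)
      · exact absurd h (by simp)
  · simp only [Sum.inr.injEq]
    rw [show ((FGraph .R (cycleG n)).Adj (Sum.inl i) (Sum.inr e)) = ((i : Fin n) ∈ e.val) from rfl]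
    rw [mem_iff hn e i, eq_E_iff hn e _ _, eq_E_iff hn e _ _]
    have hg := gVal_lt hn e
    have hi := i.isLt
    have m1 := mod2 (n := n) (gVal e + 1) (by omega)
    have m2 := mod2 (n := n) ((i : ℕ) + n - 1) (by omega)
    constructor
    · intro h
      refine Or.inr (Or.inr ?_)
      omega
    · rintro (h | h | h)
      · exact absurd h (by simp)
      · exact absurd h (by simp)
      · omega

lemma nbhd_Q_inr (hn : 3 ≤ n) (e : (cycleG n).edgeSet) :
    (FGraph .Q (cycleG n)).neighborSet (Sum.inr e) =
      {Sum.inl ⟨gVal e, gVal_lt hn e⟩,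
       Sum.inl ⟨(gVal e + 1) % n, Nat.mod_lt _ (by omega)⟩,
       Sum.inr (E hn ((gVal e + 1) % n) (Nat.mod_lt _ (by omega))),
       Sum.inr (E hn ((gVal e + n - 1) % n) (Nat.mod_lt _ (by omega)))} := by
  ext x
  simp only [SimpleGraph.mem_neighborSet, Set.mem_insert_iff, Set.mem_singleton_iff]
  have hg := gVal_lt hn e
  have m1 := mod2 (n := n) (gVal e + 1) (by omega)
  have m2 := mod2 (n := n) (gVal e + n - 1) (by omega)
  rcases x with j | f
  · simp only [Sum.inl.injEq, Fin.ext_iff, fin_val_mk]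
    rw [show ((FGraph .Q (cycleG n)).Adj (Sum.inr e) (Sum.inl j)) = ((j : Fin n) ∈ e.val) from rfl]
    rw [mem_iff hn e j]
    constructor
    · rintro (h | h)
      · exact Or.inl h
      · exact Or.inr (Or.inl h)
    · rintro (h | h | h | h)
      · exact Or.inl h
      · exact Or.inr h
      · exact absurd h (by simp)
      · exact absurd h (by simp)
  · simp only [Sum.inr.injEq]
    rw [eq_E_iff hn f _ _, eq_E_iff hn f _ _]
    have hgf := gVal_lt hn f
    have mf := mod2 (n := n) (gVal f + 1) (by omega)
    constructor
    · rintro ⟨-, hne, w, hw1, hw2⟩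
      have hne' : gVal e ≠ gVal f := fun hh => hne (gVal_inj hn hh)
      have hm1 := (mem_iff hn e w).mp hw1
      have hm2 := (mem_iff hn f w).mp hw2
      refine Or.inr (Or.inr ?_)
      omega
    · rintro (h | h | h | h)
      · exact absurd h (by simp)
      · exact absurd h (by simp)
      · refine ⟨rfl, ?_, ?_⟩
        · intro hef
          have hgef : gVal e = gVal f := by rw [hef]
          omega
        · refine ⟨⟨(gVal e + 1) % n, by omega⟩, ?_, ?_⟩
          · rw [mem_iff hn e]; right; rfl
          · rw [mem_iff hn f]; left; rw [fin_val_mk, h]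
      · refine ⟨rfl, ?_, ?_⟩
        · intro hef
          have hgef : gVal e = gVal f := by rw [hef]
          omega
        · refine ⟨⟨gVal e, hg⟩, ?_, ?_⟩
          · rw [mem_iff hn e]; left; rfl
          · rw [mem_iff hn f]; right; rw [fin_val_mk]; omega

lemma deg_R_inl (hn : 3 ≤ n) (i : Fin n) :
    deg (FGraph .R (cycleG n)) (Sum.inl i) = 4 := by
  unfold deg
  rw [nbhd_R_inl hn i]
  have hi := i.isLt
  have m1 := mod2 (n := n) ((i : ℕ) + 1) (by omega)
  have m2 := mod2 (n := n) ((i : ℕ) + n - 1) (by omega)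
  rw [Set.ncard_insert_of_notMem, Set.ncard_insert_of_notMem, Set.ncard_pair]
  · simp only [ne_eq, Sum.inr.injEq]
    intro h; have := E_inj hn h; omega
  · simp only [Set.mem_insert_iff, Set.mem_singleton_iff]
    push_neg
    constructor
    · intro h; exact absurd h (by simp)
    · intro h; exact absurd h (by simp)
  · simp only [Set.mem_insert_iff, Set.mem_singleton_iff]
    push_neg
    refine ⟨?_, ?_, ?_⟩
    · simp only [ne_eq, Sum.inl.injEq, Fin.mk.injEq]
      omega
    · intro h; exact absurd h (by simp)
    · intro h; exact absurd h (by simp)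

lemma deg_Q_inr (hn : 3 ≤ n) (e : (cycleG n).edgeSet) :
    deg (FGraph .Q (cycleG n)) (Sum.inr e) = 4 := by
  unfold deg
  rw [nbhd_Q_inr hn e]
  have hg := gVal_lt hn e
  have m1 := mod2 (n := n) (gVal e + 1) (by omega)
  have m2 := mod2 (n := n) (gVal e + n - 1) (by omega)
  rw [Set.ncard_insert_of_notMem, Set.ncard_insert_of_notMem, Set.ncard_pair]
  · simp only [ne_eq, Sum.inr.injEq]
    intro h; have := E_inj hn h; omega
  · simp only [Set.mem_insert_iff, Set.mem_singleton_iff]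
    push_neg
    constructor
    · intro h; exact absurd h (by simp)
    · intro h; exact absurd h (by simp)
  · simp only [Set.mem_insert_iff, Set.mem_singleton_iff]
    push_neg
    refine ⟨?_, ?_, ?_⟩
    · simp only [ne_eq, Sum.inl.injEq, Fin.mk.injEq]
      omega
    · intro h; exact absurd h (by simp)
    · intro h; exact absurd h (by simp)

end SRQaux
namespace SRQaux

variable {n : ℕ}

lemma maxDeg_S (hn : 3 ≤ n) : maxDeg (FGraph .S (cycleG n)) = 2 := by
  apply le_antisymm
  · apply Finset.sup_le
    rintro (i | e) -
    · exact (deg_inl hn .S rfl i).le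
    · exact (deg_inr hn .S rfl e).le
  · have h := deg_inl hn .S rfl (⟨0, by omega⟩ : Fin n)
    exact le_trans (le_of_eq h.symm) (Finset.le_sup (Finset.mem_univ _))

lemma maxDeg_R (hn : 3 ≤ n) : maxDeg (FGraph .R (cycleG n)) = 4 := by
  apply le_antisymm
  · apply Finset.sup_le
    rintro (i | e) -
    · exact (deg_R_inl hn i).le
    · exact le_trans (deg_inr hn .R rfl e).le (by omega)
  · have h := deg_R_inl hn (⟨0, by omega⟩ : Fin n)
    exact le_trans (le_of_eq h.symm) (Finset.le_sup (Finset.mem_univ _))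

lemma maxDeg_Q (hn : 3 ≤ n) : maxDeg (FGraph .Q (cycleG n)) = 4 := by
  apply le_antisymm
  · apply Finset.sup_le
    rintro (i | e) -
    · exact le_trans (deg_inl hn .Q rfl i).le (by omega)
    · exact (deg_Q_inr hn e).le
  · have h := deg_Q_inr hn (E hn 0 (by omega))
    exact le_trans (le_of_eq h.symm) (Finset.le_sup (Finset.mem_univ _))

lemma mbt_eq_of {V : Type*} (G : SimpleGraph V) (k : ℕ)
    (hmem : ∃ f p, IsMBE G k f p)
    (hlow : ∀ (k' : ℕ) (f : V → ℕ) (p : Sym2 V → ℕ), IsMBE G k' f p → k ≤ k') :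
    mbt G = k := by
  apply le_antisymm (Nat.sInf_le hmem)
  apply le_csInf ⟨k, hmem⟩
  rintro k' ⟨f, p, hp⟩
  exact hlow k' f p hp

lemma two_le {V : Type*} {G : SimpleGraph V} {k : ℕ} {f : V → ℕ} {p : Sym2 V → ℕ}
    (h : IsMBE G k f p) {u a b : V}
    (h1 : G.Adj u a) (h2 : G.Adj u b) (hab : a ≠ b) : 2 ≤ k := by
  obtain ⟨-, hlt, -, hm⟩ := h
  have q := hm u a b h1 h2 hab
  have p1 := hlt u a h1
  have p2 := hlt u b h2
  omega

lemma four_le {V : Type*} {G : SimpleGraph V} {k : ℕ} {f : V → ℕ} {p : Sym2 V → ℕ}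
    (h : IsMBE G k f p) {u a b c d : V}
    (h1 : G.Adj u a) (h2 : G.Adj u b) (h3 : G.Adj u c) (h4 : G.Adj u d)
    (hab : a ≠ b) (hac : a ≠ c) (had : a ≠ d)
    (hbc : b ≠ c) (hbd : b ≠ d) (hcd : c ≠ d) : 4 ≤ k := by
  obtain ⟨-, hlt, -, hm⟩ := h
  have q1 := hm u a b h1 h2 hab
  have q2 := hm u a c h1 h3 hac
  have q3 := hm u a d h1 h4 had
  have q4 := hm u b c h2 h3 hbc
  have q5 := hm u b d h2 h4 hbd
  have q6 := hm u c d h3 h4 hcd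
  have p1 := hlt u a h1
  have p2 := hlt u b h2
  have p3 := hlt u c h3
  have p4 := hlt u d h4
  omega

lemma mbt_S (hn : 3 ≤ n) : mbt (FGraph .S (cycleG n)) = 2 := by
  apply mbt_eq_of _ 2 ⟨_, _, isMBE_S hn⟩
  intro k f p hp
  have hnb := nbhd_inl hn .S rfl (⟨0, by omega⟩ : Fin n)
  simp only [fin_val_mk] at hnb
  have h1 : (FGraph .S (cycleG n)).Adj (Sum.inl (⟨0, by omega⟩ : Fin n))
      (Sum.inr (E hn 0 (by omega))) := by
    rw [← SimpleGraph.mem_neighborSet, hnb]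
    exact Set.mem_insert _ _
  have h2 : (FGraph .S (cycleG n)).Adj (Sum.inl (⟨0, by omega⟩ : Fin n))
      (Sum.inr (E hn ((0 + n - 1) % n) (Nat.mod_lt _ (by omega)))) := by
    rw [← SimpleGraph.mem_neighborSet, hnb]
    exact Set.mem_insert_of_mem _ (Set.mem_singleton _)
  refine two_le hp h1 h2 ?_
  simp only [ne_eq, Sum.inr.injEq]
  intro h
  have he := E_inj hn h
  have m2 := mod2 (n := n) (0 + n - 1) (by omega)
  omega

lemma mbt_R (hn : 3 ≤ n) : mbt (FGraph .R (cycleG n)) = 4 := by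
  apply mbt_eq_of _ 4 ⟨_, _, isMBE_R hn⟩
  intro k f p hp
  have hnb := nbhd_R_inl hn (⟨0, by omega⟩ : Fin n)
  simp only [fin_val_mk] at hnb
  have m1 := mod2 (n := n) (0 + 1) (by omega)
  have m2 := mod2 (n := n) (0 + n - 1) (by omega)
  have h1 : (FGraph .R (cycleG n)).Adj (Sum.inl (⟨0, by omega⟩ : Fin n))
      (Sum.inl ⟨(0 + 1) % n, Nat.mod_lt _ (by omega)⟩) := by
    rw [← SimpleGraph.mem_neighborSet, hnb]
    exact Set.mem_insert _ _
  have h2 : (FGraph .R (cycleG n)).Adj (Sum.inl (⟨0, by omega⟩ : Fin n))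
      (Sum.inl ⟨(0 + n - 1) % n, Nat.mod_lt _ (by omega)⟩) := by
    rw [← SimpleGraph.mem_neighborSet, hnb]
    exact Set.mem_insert_of_mem _ (Set.mem_insert _ _)
  have h3 : (FGraph .R (cycleG n)).Adj (Sum.inl (⟨0, by omega⟩ : Fin n))
      (Sum.inr (E hn 0 (by omega))) := by
    rw [← SimpleGraph.mem_neighborSet, hnb]
    exact Set.mem_insert_of_mem _ (Set.mem_insert_of_mem _ (Set.mem_insert _ _))
  have h4 : (FGraph .R (cycleG n)).Adj (Sum.inl (⟨0, by omega⟩ : Fin n))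
      (Sum.inr (E hn ((0 + n - 1) % n) (Nat.mod_lt _ (by omega)))) := by
    rw [← SimpleGraph.mem_neighborSet, hnb]
    exact Set.mem_insert_of_mem _ (Set.mem_insert_of_mem _
      (Set.mem_insert_of_mem _ (Set.mem_singleton _)))
  refine four_le hp h1 h2 h3 h4 ?_ ?_ ?_ ?_ ?_ ?_
  · simp only [ne_eq, Sum.inl.injEq, Fin.mk.injEq]; omega
  · simp only [ne_eq]; intro h; exact absurd h (by simp)
  · simp only [ne_eq]; intro h; exact absurd h (by simp)
  · simp only [ne_eq]; intro h; exact absurd h (by simp)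
  · simp only [ne_eq]; intro h; exact absurd h (by simp)
  · simp only [ne_eq, Sum.inr.injEq]
    intro h
    have he := E_inj hn h
    omega

lemma mbt_Q (hn : 3 ≤ n) : mbt (FGraph .Q (cycleG n)) = 4 := by
  apply mbt_eq_of _ 4 ⟨_, _, isMBE_Q hn⟩
  intro k f p hp
  have hnb := nbhd_Q_inr hn (E hn 0 (by omega))
  have hg0 : gVal (E hn 0 (by omega : (0:ℕ) < n)) = 0 := gVal_E hn 0 _
  have hg := gVal_lt hn (E hn 0 (by omega : (0:ℕ) < n))
  have m1 := mod2 (n := n) (gVal (E hn 0 (by omega : (0:ℕ) < n)) + 1) (by omega)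
  have m2 := mod2 (n := n) (gVal (E hn 0 (by omega : (0:ℕ) < n)) + n - 1) (by omega)
  have h1 : (FGraph .Q (cycleG n)).Adj (Sum.inr (E hn 0 (by omega)))
      (Sum.inl ⟨gVal (E hn 0 (by omega)), gVal_lt hn _⟩) := by
    rw [← SimpleGraph.mem_neighborSet, hnb]
    exact Set.mem_insert _ _
  have h2 : (FGraph .Q (cycleG n)).Adj (Sum.inr (E hn 0 (by omega)))
      (Sum.inl ⟨(gVal (E hn 0 (by omega)) + 1) % n, Nat.mod_lt _ (by omega)⟩) := by
    rw [← SimpleGraph.mem_neighborSet, hnb]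
    exact Set.mem_insert_of_mem _ (Set.mem_insert _ _)
  have h3 : (FGraph .Q (cycleG n)).Adj (Sum.inr (E hn 0 (by omega)))
      (Sum.inr (E hn ((gVal (E hn 0 (by omega)) + 1) % n) (Nat.mod_lt _ (by omega)))) := by
    rw [← SimpleGraph.mem_neighborSet, hnb]
    exact Set.mem_insert_of_mem _ (Set.mem_insert_of_mem _ (Set.mem_insert _ _))
  have h4 : (FGraph .Q (cycleG n)).Adj (Sum.inr (E hn 0 (by omega)))
      (Sum.inr (E hn ((gVal (E hn 0 (by omega)) + n - 1) % n) (Nat.mod_lt _ (by omega)))) := by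
    rw [← SimpleGraph.mem_neighborSet, hnb]
    exact Set.mem_insert_of_mem _ (Set.mem_insert_of_mem _
      (Set.mem_insert_of_mem _ (Set.mem_singleton _)))
  refine four_le hp h1 h2 h3 h4 ?_ ?_ ?_ ?_ ?_ ?_
  · simp only [ne_eq, Sum.inl.injEq, Fin.mk.injEq]; omega
  · simp only [ne_eq]; intro h; exact absurd h (by simp)
  · simp only [ne_eq]; intro h; exact absurd h (by simp)
  · simp only [ne_eq]; intro h; exact absurd h (by simp)
  · simp only [ne_eq]; intro h; exact absurd h (by simp)
  · simp only [ne_eq, Sum.inr.injEq]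
    intro h
    have he := E_inj hn h
    omega

end SRQaux
/-- For every `n ≥ 3`, the graphs `S(C_n)`, `R(C_n)`, `Q(C_n)` are
dispersable, with maximum degrees `2`, `4`, `4` respectively. -/
theorem SRQ_cycle_dispersable (n : ℕ) (hn : 3 ≤ n) :
    (mbt (FGraph .S (cycleG n)) = maxDeg (FGraph .S (cycleG n)) ∧
      maxDeg (FGraph .S (cycleG n)) = 2) ∧
    (mbt (FGraph .R (cycleG n)) = maxDeg (FGraph .R (cycleG n)) ∧
      maxDeg (FGraph .R (cycleG n)) = 4) ∧
    (mbt (FGraph .Q (cycleG n)) = maxDeg (FGraph .Q (cycleG n)) ∧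
      maxDeg (FGraph .Q (cycleG n)) = 4) := by
  refine ⟨⟨?_, SRQaux.maxDeg_S hn⟩, ⟨?_, SRQaux.maxDeg_R hn⟩, ⟨?_, SRQaux.maxDeg_Q hn⟩⟩
  · rw [SRQaux.mbt_S hn, SRQaux.maxDeg_S hn]
  · rw [SRQaux.mbt_R hn, SRQaux.maxDeg_R hn]
  · rw [SRQaux.mbt_Q hn, SRQaux.maxDeg_Q hn]
end

section
/- For every n ≥ 3, the total graph T(C_n) of the cycle C_n is nearly dispersable: mbt(T(C_n)) = Δ(T(C_n)) + 1 = 5. -/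
open SimpleGraph

set_option maxHeartbeats 1000000


/-- Page of the short edge (i, i+1 mod m). -/
def psF (m i : ℕ) : ℕ :=
  if m % 6 = 0 then i % 2
  else if m % 6 = 2 then
    if i < m-5 then i % 2
    else if i = m-5 then 2 else if i = m-4 then 0 else if i = m-3 then 4
    else if i = m-2 then 0 else 3
  else
    if i < m-6 then i % 2
    else if i = m-6 then 3 else if i = m-5 then 4 else if i = m-4 then 2
    else if i = m-3 then 4 else if i = m-2 then 2 else 3

/-- Page of the long edge (i, i+2 mod m). -/
def plF (m i : ℕ) : ℕ :=
  if m % 6 = 0 then 2 + i % 3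
  else if m % 6 = 2 then
    if i < m-5 then 2 + i % 3
    else if i = m-5 then 1 else if i = m-4 then 3 else if i = m-3 then 2
    else if i = m-2 then 1 else 4
  else
    if i < m-6 then 2 + i % 3
    else if i = m-6 then 0 else if i = m-5 then 1 else if i = m-4 then 3
    else if i = m-3 then 0 else if i = m-2 then 1 else 4

lemma psF_spec (m i : ℕ) (h2 : m % 2 = 0) (h6 : 6 ≤ m) (hi : i < m) :
    (m % 6 = 0 ∧ psF m i = i % 2) ∨
    (m % 6 = 2 ∧ (i < m-5 ∧ psF m i = i % 2 ∨ i = m-5 ∧ psF m i = 2 ∨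
      i = m-4 ∧ psF m i = 0 ∨ i = m-3 ∧ psF m i = 4 ∨ i = m-2 ∧ psF m i = 0 ∨
      i = m-1 ∧ psF m i = 3)) ∨
    (m % 6 = 4 ∧ (i < m-6 ∧ psF m i = i % 2 ∨ i = m-6 ∧ psF m i = 3 ∨
      i = m-5 ∧ psF m i = 4 ∨ i = m-4 ∧ psF m i = 2 ∨ i = m-3 ∧ psF m i = 4 ∨
      i = m-2 ∧ psF m i = 2 ∨ i = m-1 ∧ psF m i = 3)) := by
  rcases (show m % 6 = 0 ∨ m % 6 = 2 ∨ m % 6 = 4 by omega) with h | h | h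
  · left; exact ⟨h, by unfold psF; rw [if_pos h]⟩
  · right; left; refine ⟨h, ?_⟩
    have e : psF m i = (if i < m-5 then i % 2
      else if i = m-5 then 2 else if i = m-4 then 0 else if i = m-3 then 4
      else if i = m-2 then 0 else 3) := by
      unfold psF; rw [if_neg (by omega), if_pos h]
    rw [e]; split_ifs <;> omega
  · right; right; refine ⟨h, ?_⟩
    have e : psF m i = (if i < m-6 then i % 2
      else if i = m-6 then 3 else if i = m-5 then 4 else if i = m-4 then 2
      else if i = m-3 then 4 else if i = m-2 then 2 else 3) := by
      unfold psF; rw [if_neg (by omega), if_neg (by omega)]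
    rw [e]; split_ifs <;> omega

lemma plF_spec (m i : ℕ) (h2 : m % 2 = 0) (h6 : 6 ≤ m) (hi : i < m) :
    (m % 6 = 0 ∧ plF m i = 2 + i % 3) ∨
    (m % 6 = 2 ∧ (i < m-5 ∧ plF m i = 2 + i % 3 ∨ i = m-5 ∧ plF m i = 1 ∨
      i = m-4 ∧ plF m i = 3 ∨ i = m-3 ∧ plF m i = 2 ∨ i = m-2 ∧ plF m i = 1 ∨
      i = m-1 ∧ plF m i = 4)) ∨
    (m % 6 = 4 ∧ (i < m-6 ∧ plF m i = 2 + i % 3 ∨ i = m-6 ∧ plF m i = 0 ∨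
      i = m-5 ∧ plF m i = 1 ∨ i = m-4 ∧ plF m i = 3 ∨ i = m-3 ∧ plF m i = 0 ∨
      i = m-2 ∧ plF m i = 1 ∨ i = m-1 ∧ plF m i = 4)) := by
  rcases (show m % 6 = 0 ∨ m % 6 = 2 ∨ m % 6 = 4 by omega) with h | h | h
  · left; exact ⟨h, by unfold plF; rw [if_pos h]⟩
  · right; left; refine ⟨h, ?_⟩
    have e : plF m i = (if i < m-5 then 2 + i % 3
      else if i = m-5 then 1 else if i = m-4 then 3 else if i = m-3 then 2
      else if i = m-2 then 1 else 4) := by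
      unfold plF; rw [if_neg (by omega), if_pos h]
    rw [e]; split_ifs <;> omega
  · right; right; refine ⟨h, ?_⟩
    have e : plF m i = (if i < m-6 then 2 + i % 3
      else if i = m-6 then 0 else if i = m-5 then 1 else if i = m-4 then 3
      else if i = m-3 then 0 else if i = m-2 then 1 else 4) := by
      unfold plF; rw [if_neg (by omega), if_neg (by omega)]
    rw [e]; split_ifs <;> omega

/-- endpoints at cyclic distance 1 or 2 on [0,m). -/
def MRel (m a b : ℕ) : Prop :=
  a ≠ b ∧ (b = a+1 ∨ a = b+1 ∨ b = a+2 ∨ a = b+2 ∨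
    (a = 0 ∧ b = m-1) ∨ (b = 0 ∧ a = m-1) ∨ (a = 0 ∧ b = m-2) ∨ (b = 0 ∧ a = m-2) ∨
    (a = 1 ∧ b = m-1) ∨ (b = 1 ∧ a = m-1))

/-- the page assignment, on sorted endpoints. -/
noncomputable def pgo (m a b : ℕ) : ℕ :=
  if b = a+1 then psF m a
  else if b = a+2 then plF m a
  else if a = 0 ∧ b = m-1 then psF m (m-1)
  else if a = 0 ∧ b = m-2 then plF m (m-2)
  else if a = 1 ∧ b = m-1 then plF m (m-1)
  else 0

noncomputable def pg (m a b : ℕ) : ℕ := pgo m (min a b) (max a b)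

lemma pg_symm (m a b : ℕ) : pg m a b = pg m b a := by
  unfold pg; rw [min_comm, max_comm]

lemma pgo1 (m a b : ℕ) (h : b = a+1) : pgo m a b = psF m a := by
  unfold pgo; rw [if_pos h]
lemma pgo2 (m a b : ℕ) (h : b = a+2) : pgo m a b = plF m a := by
  unfold pgo; rw [if_neg (by omega), if_pos h]
lemma pgo3 (m a b : ℕ) (h6 : 6 ≤ m) (h : a = 0 ∧ b = m-1) : pgo m a b = psF m (m-1) := by
  unfold pgo; rw [if_neg (by omega), if_neg (by omega), if_pos h]
lemma pgo4 (m a b : ℕ) (h6 : 6 ≤ m) (h : a = 0 ∧ b = m-2) : pgo m a b = plF m (m-2) := by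
  unfold pgo; rw [if_neg (by omega), if_neg (by omega), if_neg (by omega), if_pos h]
lemma pgo5 (m a b : ℕ) (h6 : 6 ≤ m) (h : a = 1 ∧ b = m-1) : pgo m a b = plF m (m-1) := by
  unfold pgo
  rw [if_neg (by omega), if_neg (by omega), if_neg (by omega), if_neg (by omega), if_pos h]

lemma min_max_eq (a b : ℕ) (h : a ≤ b) : min a b = a ∧ max a b = b :=
  ⟨Nat.min_eq_left h, Nat.max_eq_right h⟩

lemma pg_spec (m a b : ℕ) (h6 : 6 ≤ m) (ha : a < m) (hb : b < m)
    (hr : MRel m a b) :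
    (b = a+1 ∧ pg m a b = psF m a) ∨
    (a = b+1 ∧ pg m a b = psF m b) ∨
    (b = a+2 ∧ pg m a b = plF m a) ∨
    (a = b+2 ∧ pg m a b = plF m b) ∨
    (a = 0 ∧ b = m-1 ∧ pg m a b = psF m (m-1)) ∨
    (b = 0 ∧ a = m-1 ∧ pg m a b = psF m (m-1)) ∨
    (a = 0 ∧ b = m-2 ∧ pg m a b = plF m (m-2)) ∨
    (b = 0 ∧ a = m-2 ∧ pg m a b = plF m (m-2)) ∨
    (a = 1 ∧ b = m-1 ∧ pg m a b = plF m (m-1)) ∨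
    (b = 1 ∧ a = m-1 ∧ pg m a b = plF m (m-1)) := by
  obtain ⟨hne, hr⟩ := hr
  unfold pg
  rcases hr with h | h | h | h | h | h | h | h | h | h
  · obtain ⟨e1, e2⟩ := min_max_eq a b (by omega); rw [e1, e2]
    exact Or.inl ⟨h, pgo1 m a b h⟩
  · obtain ⟨e1, e2⟩ := min_max_eq b a (by omega); rw [min_comm, max_comm, e1, e2]
    exact Or.inr (Or.inl ⟨h, pgo1 m b a h⟩)
  · obtain ⟨e1, e2⟩ := min_max_eq a b (by omega); rw [e1, e2]
    exact Or.inr (Or.inr (Or.inl ⟨h, pgo2 m a b h⟩))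
  · obtain ⟨e1, e2⟩ := min_max_eq b a (by omega); rw [min_comm, max_comm, e1, e2]
    exact Or.inr (Or.inr (Or.inr (Or.inl ⟨h, pgo2 m b a h⟩)))
  · obtain ⟨e1, e2⟩ := min_max_eq a b (by omega); rw [e1, e2]
    refine Or.inr (Or.inr (Or.inr (Or.inr (Or.inl ⟨h.1, h.2, pgo3 m a b h6 h⟩))))
  · obtain ⟨e1, e2⟩ := min_max_eq b a (by omega); rw [min_comm, max_comm, e1, e2]
    refine Or.inr (Or.inr (Or.inr (Or.inr (Or.inr (Or.inl ⟨h.1, h.2, pgo3 m b a h6 h⟩)))))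
  · obtain ⟨e1, e2⟩ := min_max_eq a b (by omega); rw [e1, e2]
    refine Or.inr (Or.inr (Or.inr (Or.inr (Or.inr (Or.inr (Or.inl ⟨h.1, h.2, pgo4 m a b h6 h⟩))))))
  · obtain ⟨e1, e2⟩ := min_max_eq b a (by omega); rw [min_comm, max_comm, e1, e2]
    refine Or.inr (Or.inr (Or.inr (Or.inr (Or.inr (Or.inr (Or.inr (Or.inl ⟨h.1, h.2, pgo4 m b a h6 h⟩)))))))
  · obtain ⟨e1, e2⟩ := min_max_eq a b (by omega); rw [e1, e2]
    refine Or.inr (Or.inr (Or.inr (Or.inr (Or.inr (Or.inr (Or.inr (Or.inr (Or.inl ⟨h.1, h.2, pgo5 m a b h6 h⟩))))))))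
  · obtain ⟨e1, e2⟩ := min_max_eq b a (by omega); rw [min_comm, max_comm, e1, e2]
    refine Or.inr (Or.inr (Or.inr (Or.inr (Or.inr (Or.inr (Or.inr (Or.inr (Or.inr ⟨h.1, h.2, pgo5 m b a h6 h⟩))))))))


lemma key2 (m a b c : ℕ) (h2 : m % 2 = 0) (h6 : 6 ≤ m)
    (ha : a < m) (hb : b < m) (hc : c < m)
    (rab : MRel m a b) (rac : MRel m a c) (hbc : b ≠ c) :
    pg m a b ≠ pg m a c := by
  have s1 := pg_spec m a b h6 ha hb rab
  have s2 := pg_spec m a c h6 ha hc rac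
  rcases s1 with ⟨h1e, h1q⟩ | ⟨h1e, h1q⟩ | ⟨h1e, h1q⟩ | ⟨h1e, h1q⟩ | ⟨h1e, h1e', h1q⟩ | ⟨h1e, h1e', h1q⟩ | ⟨h1e, h1e', h1q⟩ | ⟨h1e, h1e', h1q⟩ | ⟨h1e, h1e', h1q⟩ | ⟨h1e, h1e', h1q⟩

  · rcases s2 with ⟨h2xe, h2xq⟩ | ⟨h2xe, h2xq⟩ | ⟨h2xe, h2xq⟩ | ⟨h2xe, h2xq⟩ | ⟨h2xe, h2xe', h2xq⟩ | ⟨h2xe, h2xe', h2xq⟩ | ⟨h2xe, h2xe', h2xq⟩ | ⟨h2xe, h2xe', h2xq⟩ | ⟨h2xe, h2xe', h2xq⟩ | ⟨h2xe, h2xe', h2xq⟩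
    · first
      | omega
      | (have t1 := psF_spec m a h2 h6 (by omega)
         have t2 := psF_spec m a h2 h6 (by omega)
         omega)
    · first
      | omega
      | (have t1 := psF_spec m a h2 h6 (by omega)
         have t2 := psF_spec m c h2 h6 (by omega)
         omega)
    · first
      | omega
      | (have t1 := psF_spec m a h2 h6 (by omega)
         have t2 := plF_spec m a h2 h6 (by omega)
         omega)
    · first
      | omega
      | (have t1 := psF_spec m a h2 h6 (by omega)
         have t2 := plF_spec m c h2 h6 (by omega)
         omega)
    · first
      | omega
      | (have t1 := psF_spec m a h2 h6 (by omega)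
         have t2 := psF_spec m (m-1) h2 h6 (by omega)
         omega)
    · first
      | omega
      | (have t1 := psF_spec m a h2 h6 (by omega)
         have t2 := psF_spec m (m-1) h2 h6 (by omega)
         omega)
    · first
      | omega
      | (have t1 := psF_spec m a h2 h6 (by omega)
         have t2 := plF_spec m (m-2) h2 h6 (by omega)
         omega)
    · first
      | omega
      | (have t1 := psF_spec m a h2 h6 (by omega)
         have t2 := plF_spec m (m-2) h2 h6 (by omega)
         omega)
    · first
      | omega
      | (have t1 := psF_spec m a h2 h6 (by omega)
         have t2 := plF_spec m (m-1) h2 h6 (by omega)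
         omega)
    · first
      | omega
      | (have t1 := psF_spec m a h2 h6 (by omega)
         have t2 := plF_spec m (m-1) h2 h6 (by omega)
         omega)
  · rcases s2 with ⟨h2xe, h2xq⟩ | ⟨h2xe, h2xq⟩ | ⟨h2xe, h2xq⟩ | ⟨h2xe, h2xq⟩ | ⟨h2xe, h2xe', h2xq⟩ | ⟨h2xe, h2xe', h2xq⟩ | ⟨h2xe, h2xe', h2xq⟩ | ⟨h2xe, h2xe', h2xq⟩ | ⟨h2xe, h2xe', h2xq⟩ | ⟨h2xe, h2xe', h2xq⟩
    · first
      | omega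
      | (have t1 := psF_spec m b h2 h6 (by omega)
         have t2 := psF_spec m a h2 h6 (by omega)
         omega)
    · first
      | omega
      | (have t1 := psF_spec m b h2 h6 (by omega)
         have t2 := psF_spec m c h2 h6 (by omega)
         omega)
    · first
      | omega
      | (have t1 := psF_spec m b h2 h6 (by omega)
         have t2 := plF_spec m a h2 h6 (by omega)
         omega)
    · first
      | omega
      | (have t1 := psF_spec m b h2 h6 (by omega)
         have t2 := plF_spec m c h2 h6 (by omega)
         omega)
    · first
      | omega
      | (have t1 := psF_spec m b h2 h6 (by omega)
         have t2 := psF_spec m (m-1) h2 h6 (by omega)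
         omega)
    · first
      | omega
      | (have t1 := psF_spec m b h2 h6 (by omega)
         have t2 := psF_spec m (m-1) h2 h6 (by omega)
         omega)
    · first
      | omega
      | (have t1 := psF_spec m b h2 h6 (by omega)
         have t2 := plF_spec m (m-2) h2 h6 (by omega)
         omega)
    · first
      | omega
      | (have t1 := psF_spec m b h2 h6 (by omega)
         have t2 := plF_spec m (m-2) h2 h6 (by omega)
         omega)
    · first
      | omega
      | (have t1 := psF_spec m b h2 h6 (by omega)
         have t2 := plF_spec m (m-1) h2 h6 (by omega)
         omega)
    · first
      | omega
      | (have t1 := psF_spec m b h2 h6 (by omega)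
         have t2 := plF_spec m (m-1) h2 h6 (by omega)
         omega)
  · rcases s2 with ⟨h2xe, h2xq⟩ | ⟨h2xe, h2xq⟩ | ⟨h2xe, h2xq⟩ | ⟨h2xe, h2xq⟩ | ⟨h2xe, h2xe', h2xq⟩ | ⟨h2xe, h2xe', h2xq⟩ | ⟨h2xe, h2xe', h2xq⟩ | ⟨h2xe, h2xe', h2xq⟩ | ⟨h2xe, h2xe', h2xq⟩ | ⟨h2xe, h2xe', h2xq⟩
    · first
      | omega
      | (have t1 := plF_spec m a h2 h6 (by omega)
         have t2 := psF_spec m a h2 h6 (by omega)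
         omega)
    · first
      | omega
      | (have t1 := plF_spec m a h2 h6 (by omega)
         have t2 := psF_spec m c h2 h6 (by omega)
         omega)
    · first
      | omega
      | (have t1 := plF_spec m a h2 h6 (by omega)
         have t2 := plF_spec m a h2 h6 (by omega)
         omega)
    · first
      | omega
      | (have t1 := plF_spec m a h2 h6 (by omega)
         have t2 := plF_spec m c h2 h6 (by omega)
         omega)
    · first
      | omega
      | (have t1 := plF_spec m a h2 h6 (by omega)
         have t2 := psF_spec m (m-1) h2 h6 (by omega)
         omega)
    · first
      | omega
      | (have t1 := plF_spec m a h2 h6 (by omega)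
         have t2 := psF_spec m (m-1) h2 h6 (by omega)
         omega)
    · first
      | omega
      | (have t1 := plF_spec m a h2 h6 (by omega)
         have t2 := plF_spec m (m-2) h2 h6 (by omega)
         omega)
    · first
      | omega
      | (have t1 := plF_spec m a h2 h6 (by omega)
         have t2 := plF_spec m (m-2) h2 h6 (by omega)
         omega)
    · first
      | omega
      | (have t1 := plF_spec m a h2 h6 (by omega)
         have t2 := plF_spec m (m-1) h2 h6 (by omega)
         omega)
    · first
      | omega
      | (have t1 := plF_spec m a h2 h6 (by omega)
         have t2 := plF_spec m (m-1) h2 h6 (by omega)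
         omega)
  · rcases s2 with ⟨h2xe, h2xq⟩ | ⟨h2xe, h2xq⟩ | ⟨h2xe, h2xq⟩ | ⟨h2xe, h2xq⟩ | ⟨h2xe, h2xe', h2xq⟩ | ⟨h2xe, h2xe', h2xq⟩ | ⟨h2xe, h2xe', h2xq⟩ | ⟨h2xe, h2xe', h2xq⟩ | ⟨h2xe, h2xe', h2xq⟩ | ⟨h2xe, h2xe', h2xq⟩
    · first
      | omega
      | (have t1 := plF_spec m b h2 h6 (by omega)
         have t2 := psF_spec m a h2 h6 (by omega)
         omega)
    · first
      | omega
      | (have t1 := plF_spec m b h2 h6 (by omega)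
         have t2 := psF_spec m c h2 h6 (by omega)
         omega)
    · first
      | omega
      | (have t1 := plF_spec m b h2 h6 (by omega)
         have t2 := plF_spec m a h2 h6 (by omega)
         omega)
    · first
      | omega
      | (have t1 := plF_spec m b h2 h6 (by omega)
         have t2 := plF_spec m c h2 h6 (by omega)
         omega)
    · first
      | omega
      | (have t1 := plF_spec m b h2 h6 (by omega)
         have t2 := psF_spec m (m-1) h2 h6 (by omega)
         omega)
    · first
      | omega
      | (have t1 := plF_spec m b h2 h6 (by omega)
         have t2 := psF_spec m (m-1) h2 h6 (by omega)
         omega)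
    · first
      | omega
      | (have t1 := plF_spec m b h2 h6 (by omega)
         have t2 := plF_spec m (m-2) h2 h6 (by omega)
         omega)
    · first
      | omega
      | (have t1 := plF_spec m b h2 h6 (by omega)
         have t2 := plF_spec m (m-2) h2 h6 (by omega)
         omega)
    · first
      | omega
      | (have t1 := plF_spec m b h2 h6 (by omega)
         have t2 := plF_spec m (m-1) h2 h6 (by omega)
         omega)
    · first
      | omega
      | (have t1 := plF_spec m b h2 h6 (by omega)
         have t2 := plF_spec m (m-1) h2 h6 (by omega)
         omega)
  · rcases s2 with ⟨h2xe, h2xq⟩ | ⟨h2xe, h2xq⟩ | ⟨h2xe, h2xq⟩ | ⟨h2xe, h2xq⟩ | ⟨h2xe, h2xe', h2xq⟩ | ⟨h2xe, h2xe', h2xq⟩ | ⟨h2xe, h2xe', h2xq⟩ | ⟨h2xe, h2xe', h2xq⟩ | ⟨h2xe, h2xe', h2xq⟩ | ⟨h2xe, h2xe', h2xq⟩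
    · first
      | omega
      | (have t1 := psF_spec m (m-1) h2 h6 (by omega)
         have t2 := psF_spec m a h2 h6 (by omega)
         omega)
    · first
      | omega
      | (have t1 := psF_spec m (m-1) h2 h6 (by omega)
         have t2 := psF_spec m c h2 h6 (by omega)
         omega)
    · first
      | omega
      | (have t1 := psF_spec m (m-1) h2 h6 (by omega)
         have t2 := plF_spec m a h2 h6 (by omega)
         omega)
    · first
      | omega
      | (have t1 := psF_spec m (m-1) h2 h6 (by omega)
         have t2 := plF_spec m c h2 h6 (by omega)
         omega)
    · first
      | omega
      | (have t1 := psF_spec m (m-1) h2 h6 (by omega)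
         have t2 := psF_spec m (m-1) h2 h6 (by omega)
         omega)
    · first
      | omega
      | (have t1 := psF_spec m (m-1) h2 h6 (by omega)
         have t2 := psF_spec m (m-1) h2 h6 (by omega)
         omega)
    · first
      | omega
      | (have t1 := psF_spec m (m-1) h2 h6 (by omega)
         have t2 := plF_spec m (m-2) h2 h6 (by omega)
         omega)
    · first
      | omega
      | (have t1 := psF_spec m (m-1) h2 h6 (by omega)
         have t2 := plF_spec m (m-2) h2 h6 (by omega)
         omega)
    · first
      | omega
      | (have t1 := psF_spec m (m-1) h2 h6 (by omega)
         have t2 := plF_spec m (m-1) h2 h6 (by omega)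
         omega)
    · first
      | omega
      | (have t1 := psF_spec m (m-1) h2 h6 (by omega)
         have t2 := plF_spec m (m-1) h2 h6 (by omega)
         omega)
  · rcases s2 with ⟨h2xe, h2xq⟩ | ⟨h2xe, h2xq⟩ | ⟨h2xe, h2xq⟩ | ⟨h2xe, h2xq⟩ | ⟨h2xe, h2xe', h2xq⟩ | ⟨h2xe, h2xe', h2xq⟩ | ⟨h2xe, h2xe', h2xq⟩ | ⟨h2xe, h2xe', h2xq⟩ | ⟨h2xe, h2xe', h2xq⟩ | ⟨h2xe, h2xe', h2xq⟩
    · first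
      | omega
      | (have t1 := psF_spec m (m-1) h2 h6 (by omega)
         have t2 := psF_spec m a h2 h6 (by omega)
         omega)
    · first
      | omega
      | (have t1 := psF_spec m (m-1) h2 h6 (by omega)
         have t2 := psF_spec m c h2 h6 (by omega)
         omega)
    · first
      | omega
      | (have t1 := psF_spec m (m-1) h2 h6 (by omega)
         have t2 := plF_spec m a h2 h6 (by omega)
         omega)
    · first
      | omega
      | (have t1 := psF_spec m (m-1) h2 h6 (by omega)
         have t2 := plF_spec m c h2 h6 (by omega)
         omega)
    · first
      | omega
      | (have t1 := psF_spec m (m-1) h2 h6 (by omega)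
         have t2 := psF_spec m (m-1) h2 h6 (by omega)
         omega)
    · first
      | omega
      | (have t1 := psF_spec m (m-1) h2 h6 (by omega)
         have t2 := psF_spec m (m-1) h2 h6 (by omega)
         omega)
    · first
      | omega
      | (have t1 := psF_spec m (m-1) h2 h6 (by omega)
         have t2 := plF_spec m (m-2) h2 h6 (by omega)
         omega)
    · first
      | omega
      | (have t1 := psF_spec m (m-1) h2 h6 (by omega)
         have t2 := plF_spec m (m-2) h2 h6 (by omega)
         omega)
    · first
      | omega
      | (have t1 := psF_spec m (m-1) h2 h6 (by omega)
         have t2 := plF_spec m (m-1) h2 h6 (by omega)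
         omega)
    · first
      | omega
      | (have t1 := psF_spec m (m-1) h2 h6 (by omega)
         have t2 := plF_spec m (m-1) h2 h6 (by omega)
         omega)
  · rcases s2 with ⟨h2xe, h2xq⟩ | ⟨h2xe, h2xq⟩ | ⟨h2xe, h2xq⟩ | ⟨h2xe, h2xq⟩ | ⟨h2xe, h2xe', h2xq⟩ | ⟨h2xe, h2xe', h2xq⟩ | ⟨h2xe, h2xe', h2xq⟩ | ⟨h2xe, h2xe', h2xq⟩ | ⟨h2xe, h2xe', h2xq⟩ | ⟨h2xe, h2xe', h2xq⟩
    · first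
      | omega
      | (have t1 := plF_spec m (m-2) h2 h6 (by omega)
         have t2 := psF_spec m a h2 h6 (by omega)
         omega)
    · first
      | omega
      | (have t1 := plF_spec m (m-2) h2 h6 (by omega)
         have t2 := psF_spec m c h2 h6 (by omega)
         omega)
    · first
      | omega
      | (have t1 := plF_spec m (m-2) h2 h6 (by omega)
         have t2 := plF_spec m a h2 h6 (by omega)
         omega)
    · first
      | omega
      | (have t1 := plF_spec m (m-2) h2 h6 (by omega)
         have t2 := plF_spec m c h2 h6 (by omega)
         omega)
    · first
      | omega
      | (have t1 := plF_spec m (m-2) h2 h6 (by omega)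
         have t2 := psF_spec m (m-1) h2 h6 (by omega)
         omega)
    · first
      | omega
      | (have t1 := plF_spec m (m-2) h2 h6 (by omega)
         have t2 := psF_spec m (m-1) h2 h6 (by omega)
         omega)
    · first
      | omega
      | (have t1 := plF_spec m (m-2) h2 h6 (by omega)
         have t2 := plF_spec m (m-2) h2 h6 (by omega)
         omega)
    · first
      | omega
      | (have t1 := plF_spec m (m-2) h2 h6 (by omega)
         have t2 := plF_spec m (m-2) h2 h6 (by omega)
         omega)
    · first
      | omega
      | (have t1 := plF_spec m (m-2) h2 h6 (by omega)
         have t2 := plF_spec m (m-1) h2 h6 (by omega)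
         omega)
    · first
      | omega
      | (have t1 := plF_spec m (m-2) h2 h6 (by omega)
         have t2 := plF_spec m (m-1) h2 h6 (by omega)
         omega)
  · rcases s2 with ⟨h2xe, h2xq⟩ | ⟨h2xe, h2xq⟩ | ⟨h2xe, h2xq⟩ | ⟨h2xe, h2xq⟩ | ⟨h2xe, h2xe', h2xq⟩ | ⟨h2xe, h2xe', h2xq⟩ | ⟨h2xe, h2xe', h2xq⟩ | ⟨h2xe, h2xe', h2xq⟩ | ⟨h2xe, h2xe', h2xq⟩ | ⟨h2xe, h2xe', h2xq⟩
    · first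
      | omega
      | (have t1 := plF_spec m (m-2) h2 h6 (by omega)
         have t2 := psF_spec m a h2 h6 (by omega)
         omega)
    · first
      | omega
      | (have t1 := plF_spec m (m-2) h2 h6 (by omega)
         have t2 := psF_spec m c h2 h6 (by omega)
         omega)
    · first
      | omega
      | (have t1 := plF_spec m (m-2) h2 h6 (by omega)
         have t2 := plF_spec m a h2 h6 (by omega)
         omega)
    · first
      | omega
      | (have t1 := plF_spec m (m-2) h2 h6 (by omega)
         have t2 := plF_spec m c h2 h6 (by omega)
         omega)
    · first
      | omega
      | (have t1 := plF_spec m (m-2) h2 h6 (by omega)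
         have t2 := psF_spec m (m-1) h2 h6 (by omega)
         omega)
    · first
      | omega
      | (have t1 := plF_spec m (m-2) h2 h6 (by omega)
         have t2 := psF_spec m (m-1) h2 h6 (by omega)
         omega)
    · first
      | omega
      | (have t1 := plF_spec m (m-2) h2 h6 (by omega)
         have t2 := plF_spec m (m-2) h2 h6 (by omega)
         omega)
    · first
      | omega
      | (have t1 := plF_spec m (m-2) h2 h6 (by omega)
         have t2 := plF_spec m (m-2) h2 h6 (by omega)
         omega)
    · first
      | omega
      | (have t1 := plF_spec m (m-2) h2 h6 (by omega)
         have t2 := plF_spec m (m-1) h2 h6 (by omega)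
         omega)
    · first
      | omega
      | (have t1 := plF_spec m (m-2) h2 h6 (by omega)
         have t2 := plF_spec m (m-1) h2 h6 (by omega)
         omega)
  · rcases s2 with ⟨h2xe, h2xq⟩ | ⟨h2xe, h2xq⟩ | ⟨h2xe, h2xq⟩ | ⟨h2xe, h2xq⟩ | ⟨h2xe, h2xe', h2xq⟩ | ⟨h2xe, h2xe', h2xq⟩ | ⟨h2xe, h2xe', h2xq⟩ | ⟨h2xe, h2xe', h2xq⟩ | ⟨h2xe, h2xe', h2xq⟩ | ⟨h2xe, h2xe', h2xq⟩
    · first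
      | omega
      | (have t1 := plF_spec m (m-1) h2 h6 (by omega)
         have t2 := psF_spec m a h2 h6 (by omega)
         omega)
    · first
      | omega
      | (have t1 := plF_spec m (m-1) h2 h6 (by omega)
         have t2 := psF_spec m c h2 h6 (by omega)
         omega)
    · first
      | omega
      | (have t1 := plF_spec m (m-1) h2 h6 (by omega)
         have t2 := plF_spec m a h2 h6 (by omega)
         omega)
    · first
      | omega
      | (have t1 := plF_spec m (m-1) h2 h6 (by omega)
         have t2 := plF_spec m c h2 h6 (by omega)
         omega)
    · first
      | omega
      | (have t1 := plF_spec m (m-1) h2 h6 (by omega)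
         have t2 := psF_spec m (m-1) h2 h6 (by omega)
         omega)
    · first
      | omega
      | (have t1 := plF_spec m (m-1) h2 h6 (by omega)
         have t2 := psF_spec m (m-1) h2 h6 (by omega)
         omega)
    · first
      | omega
      | (have t1 := plF_spec m (m-1) h2 h6 (by omega)
         have t2 := plF_spec m (m-2) h2 h6 (by omega)
         omega)
    · first
      | omega
      | (have t1 := plF_spec m (m-1) h2 h6 (by omega)
         have t2 := plF_spec m (m-2) h2 h6 (by omega)
         omega)
    · first
      | omega
      | (have t1 := plF_spec m (m-1) h2 h6 (by omega)
         have t2 := plF_spec m (m-1) h2 h6 (by omega)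
         omega)
    · first
      | omega
      | (have t1 := plF_spec m (m-1) h2 h6 (by omega)
         have t2 := plF_spec m (m-1) h2 h6 (by omega)
         omega)
  · rcases s2 with ⟨h2xe, h2xq⟩ | ⟨h2xe, h2xq⟩ | ⟨h2xe, h2xq⟩ | ⟨h2xe, h2xq⟩ | ⟨h2xe, h2xe', h2xq⟩ | ⟨h2xe, h2xe', h2xq⟩ | ⟨h2xe, h2xe', h2xq⟩ | ⟨h2xe, h2xe', h2xq⟩ | ⟨h2xe, h2xe', h2xq⟩ | ⟨h2xe, h2xe', h2xq⟩
    · first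
      | omega
      | (have t1 := plF_spec m (m-1) h2 h6 (by omega)
         have t2 := psF_spec m a h2 h6 (by omega)
         omega)
    · first
      | omega
      | (have t1 := plF_spec m (m-1) h2 h6 (by omega)
         have t2 := psF_spec m c h2 h6 (by omega)
         omega)
    · first
      | omega
      | (have t1 := plF_spec m (m-1) h2 h6 (by omega)
         have t2 := plF_spec m a h2 h6 (by omega)
         omega)
    · first
      | omega
      | (have t1 := plF_spec m (m-1) h2 h6 (by omega)
         have t2 := plF_spec m c h2 h6 (by omega)
         omega)
    · first
      | omega
      | (have t1 := plF_spec m (m-1) h2 h6 (by omega)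
         have t2 := psF_spec m (m-1) h2 h6 (by omega)
         omega)
    · first
      | omega
      | (have t1 := plF_spec m (m-1) h2 h6 (by omega)
         have t2 := psF_spec m (m-1) h2 h6 (by omega)
         omega)
    · first
      | omega
      | (have t1 := plF_spec m (m-1) h2 h6 (by omega)
         have t2 := plF_spec m (m-2) h2 h6 (by omega)
         omega)
    · first
      | omega
      | (have t1 := plF_spec m (m-1) h2 h6 (by omega)
         have t2 := plF_spec m (m-2) h2 h6 (by omega)
         omega)
    · first
      | omega
      | (have t1 := plF_spec m (m-1) h2 h6 (by omega)
         have t2 := plF_spec m (m-1) h2 h6 (by omega)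
         omega)
    · first
      | omega
      | (have t1 := plF_spec m (m-1) h2 h6 (by omega)
         have t2 := plF_spec m (m-1) h2 h6 (by omega)
         omega)

lemma key (m a b c d : ℕ) (h2 : m % 2 = 0) (h6 : 6 ≤ m)
    (ha : a < m) (hb : b < m) (hc : c < m) (hd : d < m)
    (rab : MRel m a b) (rcd : MRel m c d) (hp : pg m a b = pg m c d)
    (o1 : a < c) (o2 : c < b) (o3 : b < d) : False := by
  have s1 := pg_spec m a b h6 ha hb rab
  have s2 := pg_spec m c d h6 hc hd rcd
  rcases s1 with ⟨h1e, h1q⟩ | ⟨h1e, h1q⟩ | ⟨h1e, h1q⟩ | ⟨h1e, h1q⟩ | ⟨h1e, h1e', h1q⟩ | ⟨h1e, h1e', h1q⟩ | ⟨h1e, h1e', h1q⟩ | ⟨h1e, h1e', h1q⟩ | ⟨h1e, h1e', h1q⟩ | ⟨h1e, h1e', h1q⟩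

  · rcases s2 with ⟨h2xe, h2xq⟩ | ⟨h2xe, h2xq⟩ | ⟨h2xe, h2xq⟩ | ⟨h2xe, h2xq⟩ | ⟨h2xe, h2xe', h2xq⟩ | ⟨h2xe, h2xe', h2xq⟩ | ⟨h2xe, h2xe', h2xq⟩ | ⟨h2xe, h2xe', h2xq⟩ | ⟨h2xe, h2xe', h2xq⟩ | ⟨h2xe, h2xe', h2xq⟩
    · first
      | omega
      | (have t1 := psF_spec m a h2 h6 (by omega)
         have t2 := psF_spec m c h2 h6 (by omega)
         omega)
    · first
      | omega
      | (have t1 := psF_spec m a h2 h6 (by omega)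
         have t2 := psF_spec m d h2 h6 (by omega)
         omega)
    · first
      | omega
      | (have t1 := psF_spec m a h2 h6 (by omega)
         have t2 := plF_spec m c h2 h6 (by omega)
         omega)
    · first
      | omega
      | (have t1 := psF_spec m a h2 h6 (by omega)
         have t2 := plF_spec m d h2 h6 (by omega)
         omega)
    · first
      | omega
      | (have t1 := psF_spec m a h2 h6 (by omega)
         have t2 := psF_spec m (m-1) h2 h6 (by omega)
         omega)
    · first
      | omega
      | (have t1 := psF_spec m a h2 h6 (by omega)
         have t2 := psF_spec m (m-1) h2 h6 (by omega)
         omega)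
    · first
      | omega
      | (have t1 := psF_spec m a h2 h6 (by omega)
         have t2 := plF_spec m (m-2) h2 h6 (by omega)
         omega)
    · first
      | omega
      | (have t1 := psF_spec m a h2 h6 (by omega)
         have t2 := plF_spec m (m-2) h2 h6 (by omega)
         omega)
    · first
      | omega
      | (have t1 := psF_spec m a h2 h6 (by omega)
         have t2 := plF_spec m (m-1) h2 h6 (by omega)
         omega)
    · first
      | omega
      | (have t1 := psF_spec m a h2 h6 (by omega)
         have t2 := plF_spec m (m-1) h2 h6 (by omega)
         omega)
  · rcases s2 with ⟨h2xe, h2xq⟩ | ⟨h2xe, h2xq⟩ | ⟨h2xe, h2xq⟩ | ⟨h2xe, h2xq⟩ | ⟨h2xe, h2xe', h2xq⟩ | ⟨h2xe, h2xe', h2xq⟩ | ⟨h2xe, h2xe', h2xq⟩ | ⟨h2xe, h2xe', h2xq⟩ | ⟨h2xe, h2xe', h2xq⟩ | ⟨h2xe, h2xe', h2xq⟩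
    · first
      | omega
      | (have t1 := psF_spec m b h2 h6 (by omega)
         have t2 := psF_spec m c h2 h6 (by omega)
         omega)
    · first
      | omega
      | (have t1 := psF_spec m b h2 h6 (by omega)
         have t2 := psF_spec m d h2 h6 (by omega)
         omega)
    · first
      | omega
      | (have t1 := psF_spec m b h2 h6 (by omega)
         have t2 := plF_spec m c h2 h6 (by omega)
         omega)
    · first
      | omega
      | (have t1 := psF_spec m b h2 h6 (by omega)
         have t2 := plF_spec m d h2 h6 (by omega)
         omega)
    · first
      | omega
      | (have t1 := psF_spec m b h2 h6 (by omega)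
         have t2 := psF_spec m (m-1) h2 h6 (by omega)
         omega)
    · first
      | omega
      | (have t1 := psF_spec m b h2 h6 (by omega)
         have t2 := psF_spec m (m-1) h2 h6 (by omega)
         omega)
    · first
      | omega
      | (have t1 := psF_spec m b h2 h6 (by omega)
         have t2 := plF_spec m (m-2) h2 h6 (by omega)
         omega)
    · first
      | omega
      | (have t1 := psF_spec m b h2 h6 (by omega)
         have t2 := plF_spec m (m-2) h2 h6 (by omega)
         omega)
    · first
      | omega
      | (have t1 := psF_spec m b h2 h6 (by omega)
         have t2 := plF_spec m (m-1) h2 h6 (by omega)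
         omega)
    · first
      | omega
      | (have t1 := psF_spec m b h2 h6 (by omega)
         have t2 := plF_spec m (m-1) h2 h6 (by omega)
         omega)
  · rcases s2 with ⟨h2xe, h2xq⟩ | ⟨h2xe, h2xq⟩ | ⟨h2xe, h2xq⟩ | ⟨h2xe, h2xq⟩ | ⟨h2xe, h2xe', h2xq⟩ | ⟨h2xe, h2xe', h2xq⟩ | ⟨h2xe, h2xe', h2xq⟩ | ⟨h2xe, h2xe', h2xq⟩ | ⟨h2xe, h2xe', h2xq⟩ | ⟨h2xe, h2xe', h2xq⟩
    · first
      | omega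
      | (have t1 := plF_spec m a h2 h6 (by omega)
         have t2 := psF_spec m c h2 h6 (by omega)
         omega)
    · first
      | omega
      | (have t1 := plF_spec m a h2 h6 (by omega)
         have t2 := psF_spec m d h2 h6 (by omega)
         omega)
    · first
      | omega
      | (have t1 := plF_spec m a h2 h6 (by omega)
         have t2 := plF_spec m c h2 h6 (by omega)
         omega)
    · first
      | omega
      | (have t1 := plF_spec m a h2 h6 (by omega)
         have t2 := plF_spec m d h2 h6 (by omega)
         omega)
    · first
      | omega
      | (have t1 := plF_spec m a h2 h6 (by omega)
         have t2 := psF_spec m (m-1) h2 h6 (by omega)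
         omega)
    · first
      | omega
      | (have t1 := plF_spec m a h2 h6 (by omega)
         have t2 := psF_spec m (m-1) h2 h6 (by omega)
         omega)
    · first
      | omega
      | (have t1 := plF_spec m a h2 h6 (by omega)
         have t2 := plF_spec m (m-2) h2 h6 (by omega)
         omega)
    · first
      | omega
      | (have t1 := plF_spec m a h2 h6 (by omega)
         have t2 := plF_spec m (m-2) h2 h6 (by omega)
         omega)
    · first
      | omega
      | (have t1 := plF_spec m a h2 h6 (by omega)
         have t2 := plF_spec m (m-1) h2 h6 (by omega)
         omega)
    · first
      | omega
      | (have t1 := plF_spec m a h2 h6 (by omega)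
         have t2 := plF_spec m (m-1) h2 h6 (by omega)
         omega)
  · rcases s2 with ⟨h2xe, h2xq⟩ | ⟨h2xe, h2xq⟩ | ⟨h2xe, h2xq⟩ | ⟨h2xe, h2xq⟩ | ⟨h2xe, h2xe', h2xq⟩ | ⟨h2xe, h2xe', h2xq⟩ | ⟨h2xe, h2xe', h2xq⟩ | ⟨h2xe, h2xe', h2xq⟩ | ⟨h2xe, h2xe', h2xq⟩ | ⟨h2xe, h2xe', h2xq⟩
    · first
      | omega
      | (have t1 := plF_spec m b h2 h6 (by omega)
         have t2 := psF_spec m c h2 h6 (by omega)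
         omega)
    · first
      | omega
      | (have t1 := plF_spec m b h2 h6 (by omega)
         have t2 := psF_spec m d h2 h6 (by omega)
         omega)
    · first
      | omega
      | (have t1 := plF_spec m b h2 h6 (by omega)
         have t2 := plF_spec m c h2 h6 (by omega)
         omega)
    · first
      | omega
      | (have t1 := plF_spec m b h2 h6 (by omega)
         have t2 := plF_spec m d h2 h6 (by omega)
         omega)
    · first
      | omega
      | (have t1 := plF_spec m b h2 h6 (by omega)
         have t2 := psF_spec m (m-1) h2 h6 (by omega)
         omega)
    · first
      | omega
      | (have t1 := plF_spec m b h2 h6 (by omega)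
         have t2 := psF_spec m (m-1) h2 h6 (by omega)
         omega)
    · first
      | omega
      | (have t1 := plF_spec m b h2 h6 (by omega)
         have t2 := plF_spec m (m-2) h2 h6 (by omega)
         omega)
    · first
      | omega
      | (have t1 := plF_spec m b h2 h6 (by omega)
         have t2 := plF_spec m (m-2) h2 h6 (by omega)
         omega)
    · first
      | omega
      | (have t1 := plF_spec m b h2 h6 (by omega)
         have t2 := plF_spec m (m-1) h2 h6 (by omega)
         omega)
    · first
      | omega
      | (have t1 := plF_spec m b h2 h6 (by omega)
         have t2 := plF_spec m (m-1) h2 h6 (by omega)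
         omega)
  · rcases s2 with ⟨h2xe, h2xq⟩ | ⟨h2xe, h2xq⟩ | ⟨h2xe, h2xq⟩ | ⟨h2xe, h2xq⟩ | ⟨h2xe, h2xe', h2xq⟩ | ⟨h2xe, h2xe', h2xq⟩ | ⟨h2xe, h2xe', h2xq⟩ | ⟨h2xe, h2xe', h2xq⟩ | ⟨h2xe, h2xe', h2xq⟩ | ⟨h2xe, h2xe', h2xq⟩
    · first
      | omega
      | (have t1 := psF_spec m (m-1) h2 h6 (by omega)
         have t2 := psF_spec m c h2 h6 (by omega)
         omega)
    · first
      | omega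
      | (have t1 := psF_spec m (m-1) h2 h6 (by omega)
         have t2 := psF_spec m d h2 h6 (by omega)
         omega)
    · first
      | omega
      | (have t1 := psF_spec m (m-1) h2 h6 (by omega)
         have t2 := plF_spec m c h2 h6 (by omega)
         omega)
    · first
      | omega
      | (have t1 := psF_spec m (m-1) h2 h6 (by omega)
         have t2 := plF_spec m d h2 h6 (by omega)
         omega)
    · first
      | omega
      | (have t1 := psF_spec m (m-1) h2 h6 (by omega)
         have t2 := psF_spec m (m-1) h2 h6 (by omega)
         omega)
    · first
      | omega
      | (have t1 := psF_spec m (m-1) h2 h6 (by omega)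
         have t2 := psF_spec m (m-1) h2 h6 (by omega)
         omega)
    · first
      | omega
      | (have t1 := psF_spec m (m-1) h2 h6 (by omega)
         have t2 := plF_spec m (m-2) h2 h6 (by omega)
         omega)
    · first
      | omega
      | (have t1 := psF_spec m (m-1) h2 h6 (by omega)
         have t2 := plF_spec m (m-2) h2 h6 (by omega)
         omega)
    · first
      | omega
      | (have t1 := psF_spec m (m-1) h2 h6 (by omega)
         have t2 := plF_spec m (m-1) h2 h6 (by omega)
         omega)
    · first
      | omega
      | (have t1 := psF_spec m (m-1) h2 h6 (by omega)
         have t2 := plF_spec m (m-1) h2 h6 (by omega)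
         omega)
  · rcases s2 with ⟨h2xe, h2xq⟩ | ⟨h2xe, h2xq⟩ | ⟨h2xe, h2xq⟩ | ⟨h2xe, h2xq⟩ | ⟨h2xe, h2xe', h2xq⟩ | ⟨h2xe, h2xe', h2xq⟩ | ⟨h2xe, h2xe', h2xq⟩ | ⟨h2xe, h2xe', h2xq⟩ | ⟨h2xe, h2xe', h2xq⟩ | ⟨h2xe, h2xe', h2xq⟩
    · first
      | omega
      | (have t1 := psF_spec m (m-1) h2 h6 (by omega)
         have t2 := psF_spec m c h2 h6 (by omega)
         omega)
    · first
      | omega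
      | (have t1 := psF_spec m (m-1) h2 h6 (by omega)
         have t2 := psF_spec m d h2 h6 (by omega)
         omega)
    · first
      | omega
      | (have t1 := psF_spec m (m-1) h2 h6 (by omega)
         have t2 := plF_spec m c h2 h6 (by omega)
         omega)
    · first
      | omega
      | (have t1 := psF_spec m (m-1) h2 h6 (by omega)
         have t2 := plF_spec m d h2 h6 (by omega)
         omega)
    · first
      | omega
      | (have t1 := psF_spec m (m-1) h2 h6 (by omega)
         have t2 := psF_spec m (m-1) h2 h6 (by omega)
         omega)
    · first
      | omega
      | (have t1 := psF_spec m (m-1) h2 h6 (by omega)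
         have t2 := psF_spec m (m-1) h2 h6 (by omega)
         omega)
    · first
      | omega
      | (have t1 := psF_spec m (m-1) h2 h6 (by omega)
         have t2 := plF_spec m (m-2) h2 h6 (by omega)
         omega)
    · first
      | omega
      | (have t1 := psF_spec m (m-1) h2 h6 (by omega)
         have t2 := plF_spec m (m-2) h2 h6 (by omega)
         omega)
    · first
      | omega
      | (have t1 := psF_spec m (m-1) h2 h6 (by omega)
         have t2 := plF_spec m (m-1) h2 h6 (by omega)
         omega)
    · first
      | omega
      | (have t1 := psF_spec m (m-1) h2 h6 (by omega)
         have t2 := plF_spec m (m-1) h2 h6 (by omega)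
         omega)
  · rcases s2 with ⟨h2xe, h2xq⟩ | ⟨h2xe, h2xq⟩ | ⟨h2xe, h2xq⟩ | ⟨h2xe, h2xq⟩ | ⟨h2xe, h2xe', h2xq⟩ | ⟨h2xe, h2xe', h2xq⟩ | ⟨h2xe, h2xe', h2xq⟩ | ⟨h2xe, h2xe', h2xq⟩ | ⟨h2xe, h2xe', h2xq⟩ | ⟨h2xe, h2xe', h2xq⟩
    · first
      | omega
      | (have t1 := plF_spec m (m-2) h2 h6 (by omega)
         have t2 := psF_spec m c h2 h6 (by omega)
         omega)
    · first
      | omega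
      | (have t1 := plF_spec m (m-2) h2 h6 (by omega)
         have t2 := psF_spec m d h2 h6 (by omega)
         omega)
    · first
      | omega
      | (have t1 := plF_spec m (m-2) h2 h6 (by omega)
         have t2 := plF_spec m c h2 h6 (by omega)
         omega)
    · first
      | omega
      | (have t1 := plF_spec m (m-2) h2 h6 (by omega)
         have t2 := plF_spec m d h2 h6 (by omega)
         omega)
    · first
      | omega
      | (have t1 := plF_spec m (m-2) h2 h6 (by omega)
         have t2 := psF_spec m (m-1) h2 h6 (by omega)
         omega)
    · first
      | omega
      | (have t1 := plF_spec m (m-2) h2 h6 (by omega)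
         have t2 := psF_spec m (m-1) h2 h6 (by omega)
         omega)
    · first
      | omega
      | (have t1 := plF_spec m (m-2) h2 h6 (by omega)
         have t2 := plF_spec m (m-2) h2 h6 (by omega)
         omega)
    · first
      | omega
      | (have t1 := plF_spec m (m-2) h2 h6 (by omega)
         have t2 := plF_spec m (m-2) h2 h6 (by omega)
         omega)
    · first
      | omega
      | (have t1 := plF_spec m (m-2) h2 h6 (by omega)
         have t2 := plF_spec m (m-1) h2 h6 (by omega)
         omega)
    · first
      | omega
      | (have t1 := plF_spec m (m-2) h2 h6 (by omega)
         have t2 := plF_spec m (m-1) h2 h6 (by omega)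
         omega)
  · rcases s2 with ⟨h2xe, h2xq⟩ | ⟨h2xe, h2xq⟩ | ⟨h2xe, h2xq⟩ | ⟨h2xe, h2xq⟩ | ⟨h2xe, h2xe', h2xq⟩ | ⟨h2xe, h2xe', h2xq⟩ | ⟨h2xe, h2xe', h2xq⟩ | ⟨h2xe, h2xe', h2xq⟩ | ⟨h2xe, h2xe', h2xq⟩ | ⟨h2xe, h2xe', h2xq⟩
    · first
      | omega
      | (have t1 := plF_spec m (m-2) h2 h6 (by omega)
         have t2 := psF_spec m c h2 h6 (by omega)
         omega)
    · first
      | omega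
      | (have t1 := plF_spec m (m-2) h2 h6 (by omega)
         have t2 := psF_spec m d h2 h6 (by omega)
         omega)
    · first
      | omega
      | (have t1 := plF_spec m (m-2) h2 h6 (by omega)
         have t2 := plF_spec m c h2 h6 (by omega)
         omega)
    · first
      | omega
      | (have t1 := plF_spec m (m-2) h2 h6 (by omega)
         have t2 := plF_spec m d h2 h6 (by omega)
         omega)
    · first
      | omega
      | (have t1 := plF_spec m (m-2) h2 h6 (by omega)
         have t2 := psF_spec m (m-1) h2 h6 (by omega)
         omega)
    · first
      | omega
      | (have t1 := plF_spec m (m-2) h2 h6 (by omega)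
         have t2 := psF_spec m (m-1) h2 h6 (by omega)
         omega)
    · first
      | omega
      | (have t1 := plF_spec m (m-2) h2 h6 (by omega)
         have t2 := plF_spec m (m-2) h2 h6 (by omega)
         omega)
    · first
      | omega
      | (have t1 := plF_spec m (m-2) h2 h6 (by omega)
         have t2 := plF_spec m (m-2) h2 h6 (by omega)
         omega)
    · first
      | omega
      | (have t1 := plF_spec m (m-2) h2 h6 (by omega)
         have t2 := plF_spec m (m-1) h2 h6 (by omega)
         omega)
    · first
      | omega
      | (have t1 := plF_spec m (m-2) h2 h6 (by omega)
         have t2 := plF_spec m (m-1) h2 h6 (by omega)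
         omega)
  · rcases s2 with ⟨h2xe, h2xq⟩ | ⟨h2xe, h2xq⟩ | ⟨h2xe, h2xq⟩ | ⟨h2xe, h2xq⟩ | ⟨h2xe, h2xe', h2xq⟩ | ⟨h2xe, h2xe', h2xq⟩ | ⟨h2xe, h2xe', h2xq⟩ | ⟨h2xe, h2xe', h2xq⟩ | ⟨h2xe, h2xe', h2xq⟩ | ⟨h2xe, h2xe', h2xq⟩
    · first
      | omega
      | (have t1 := plF_spec m (m-1) h2 h6 (by omega)
         have t2 := psF_spec m c h2 h6 (by omega)
         omega)
    · first
      | omega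
      | (have t1 := plF_spec m (m-1) h2 h6 (by omega)
         have t2 := psF_spec m d h2 h6 (by omega)
         omega)
    · first
      | omega
      | (have t1 := plF_spec m (m-1) h2 h6 (by omega)
         have t2 := plF_spec m c h2 h6 (by omega)
         omega)
    · first
      | omega
      | (have t1 := plF_spec m (m-1) h2 h6 (by omega)
         have t2 := plF_spec m d h2 h6 (by omega)
         omega)
    · first
      | omega
      | (have t1 := plF_spec m (m-1) h2 h6 (by omega)
         have t2 := psF_spec m (m-1) h2 h6 (by omega)
         omega)
    · first
      | omega
      | (have t1 := plF_spec m (m-1) h2 h6 (by omega)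
         have t2 := psF_spec m (m-1) h2 h6 (by omega)
         omega)
    · first
      | omega
      | (have t1 := plF_spec m (m-1) h2 h6 (by omega)
         have t2 := plF_spec m (m-2) h2 h6 (by omega)
         omega)
    · first
      | omega
      | (have t1 := plF_spec m (m-1) h2 h6 (by omega)
         have t2 := plF_spec m (m-2) h2 h6 (by omega)
         omega)
    · first
      | omega
      | (have t1 := plF_spec m (m-1) h2 h6 (by omega)
         have t2 := plF_spec m (m-1) h2 h6 (by omega)
         omega)
    · first
      | omega
      | (have t1 := plF_spec m (m-1) h2 h6 (by omega)
         have t2 := plF_spec m (m-1) h2 h6 (by omega)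
         omega)
  · rcases s2 with ⟨h2xe, h2xq⟩ | ⟨h2xe, h2xq⟩ | ⟨h2xe, h2xq⟩ | ⟨h2xe, h2xq⟩ | ⟨h2xe, h2xe', h2xq⟩ | ⟨h2xe, h2xe', h2xq⟩ | ⟨h2xe, h2xe', h2xq⟩ | ⟨h2xe, h2xe', h2xq⟩ | ⟨h2xe, h2xe', h2xq⟩ | ⟨h2xe, h2xe', h2xq⟩
    · first
      | omega
      | (have t1 := plF_spec m (m-1) h2 h6 (by omega)
         have t2 := psF_spec m c h2 h6 (by omega)
         omega)
    · first
      | omega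
      | (have t1 := plF_spec m (m-1) h2 h6 (by omega)
         have t2 := psF_spec m d h2 h6 (by omega)
         omega)
    · first
      | omega
      | (have t1 := plF_spec m (m-1) h2 h6 (by omega)
         have t2 := plF_spec m c h2 h6 (by omega)
         omega)
    · first
      | omega
      | (have t1 := plF_spec m (m-1) h2 h6 (by omega)
         have t2 := plF_spec m d h2 h6 (by omega)
         omega)
    · first
      | omega
      | (have t1 := plF_spec m (m-1) h2 h6 (by omega)
         have t2 := psF_spec m (m-1) h2 h6 (by omega)
         omega)
    · first
      | omega
      | (have t1 := plF_spec m (m-1) h2 h6 (by omega)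
         have t2 := psF_spec m (m-1) h2 h6 (by omega)
         omega)
    · first
      | omega
      | (have t1 := plF_spec m (m-1) h2 h6 (by omega)
         have t2 := plF_spec m (m-2) h2 h6 (by omega)
         omega)
    · first
      | omega
      | (have t1 := plF_spec m (m-1) h2 h6 (by omega)
         have t2 := plF_spec m (m-2) h2 h6 (by omega)
         omega)
    · first
      | omega
      | (have t1 := plF_spec m (m-1) h2 h6 (by omega)
         have t2 := plF_spec m (m-1) h2 h6 (by omega)
         omega)
    · first
      | omega
      | (have t1 := plF_spec m (m-1) h2 h6 (by omega)
         have t2 := plF_spec m (m-1) h2 h6 (by omega)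
         omega)

lemma psF_lt5 (m i : ℕ) : psF m i < 5 := by
  unfold psF; split_ifs <;> omega

lemma plF_lt5 (m i : ℕ) : plF m i < 5 := by
  unfold plF; split_ifs <;> omega

lemma pg_lt5 (m a b : ℕ) (h2 : m % 2 = 0) (h6 : 6 ≤ m) (ha : a < m) (hb : b < m)
    (hr : MRel m a b) : pg m a b < 5 := by
  have s1 := pg_spec m a b h6 ha hb hr
  have u1 := psF_lt5 m a; have u2 := psF_lt5 m b
  have u3 := plF_lt5 m a; have u4 := plF_lt5 m b
  have u5 := psF_lt5 m (m-1); have u6 := plF_lt5 m (m-2); have u7 := plF_lt5 m (m-1)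
  omega


section Graphside
variable (n : ℕ)

abbrev TCV (n : ℕ) := Fin n ⊕ (cycleG n).edgeSet

lemma mod_succ_lt (x n : ℕ) (hn : 0 < n) : (x+1) % n < n := Nat.mod_lt _ hn

/-- successor in Fin n -/
def nxt (hn : 3 ≤ n) (i : Fin n) : Fin n := ⟨((i : ℕ)+1) % n, mod_succ_lt _ _ (by omega)⟩

lemma mod1 (x y n : ℕ) (hx : x < n) (hy : y < n) :
    ((x+1) % n = y) ↔ (y = x+1 ∨ (x = n-1 ∧ y = 0)) := by
  rcases Nat.lt_or_ge (x+1) n with h | h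
  · rw [Nat.mod_eq_of_lt h]; omega
  · have hxe : x + 1 = n := by omega
    rw [hxe, Nat.mod_self]; omega

lemma cycle_adj_iff (hn : 3 ≤ n) (i j : Fin n) :
    (cycleG n).Adj i j ↔ ((j : ℕ) = i+1 ∨ ((i : ℕ) = n-1 ∧ (j : ℕ) = 0) ∨
      (i : ℕ) = j+1 ∨ ((j : ℕ) = n-1 ∧ (i : ℕ) = 0)) := by
  have hi := i.isLt; have hj := j.isLt
  show (i ≠ j ∧ _) ↔ _
  rw [mod1 _ _ _ hi hj, mod1 _ _ _ hj hi, Ne, ← Fin.val_eq_val]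
  omega

lemma edge_rep (hn : 3 ≤ n) (e : (cycleG n).edgeSet) :
    ∃ i : Fin n, (e : Sym2 (Fin n)) = s(i, nxt n hn i) := by
  obtain ⟨e, he⟩ := e
  induction e with
  | _ a b =>
    have he' := he
    rw [SimpleGraph.mem_edgeSet, cycle_adj_iff n hn] at he'
    have ha := a.isLt; have hb := b.isLt
    have case1 : (b : ℕ) = ((a : ℕ)+1) % n → ∃ i : Fin n,
        (↑(⟨s(a, b), he⟩ : (cycleG n).edgeSet) : Sym2 (Fin n)) = s(i, nxt n hn i) := by
      intro h
      refine ⟨a, ?_⟩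
      have hb' : b = nxt n hn a := Fin.ext h
      show s(a, b) = s(a, nxt n hn a)
      rw [← hb']
    have case2 : (a : ℕ) = ((b : ℕ)+1) % n → ∃ i : Fin n,
        (↑(⟨s(a, b), he⟩ : (cycleG n).edgeSet) : Sym2 (Fin n)) = s(i, nxt n hn i) := by
      intro h
      refine ⟨b, ?_⟩
      have ha' : a = nxt n hn b := Fin.ext h
      show s(a, b) = s(b, nxt n hn b)
      rw [← ha', Sym2.eq_swap]
    rcases he' with h | h | h | h
    · exact case1 (by rw [eq_comm, mod1 _ _ _ ha hb]; omega)
    · exact case1 (by rw [eq_comm, mod1 _ _ _ ha hb]; omega)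
    · exact case2 (by rw [eq_comm, mod1 _ _ _ hb ha]; omega)
    · exact case2 (by rw [eq_comm, mod1 _ _ _ hb ha]; omega)

/-- the canonical start vertex of an edge of the cycle. -/
noncomputable def st (hn : 3 ≤ n) (e : (cycleG n).edgeSet) : Fin n :=
  Classical.choose (edge_rep n hn e)

lemma st_spec (hn : 3 ≤ n) (e : (cycleG n).edgeSet) :
    (e : Sym2 (Fin n)) = s(st n hn e, nxt n hn (st n hn e)) :=
  Classical.choose_spec (edge_rep n hn e)

lemma st_inj (hn : 3 ≤ n) (e f : (cycleG n).edgeSet)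
    (h : st n hn e = st n hn f) : e = f := by
  apply Subtype.ext
  rw [show ((e : Sym2 (Fin n))) = _ from st_spec n hn e,
      show ((f : Sym2 (Fin n))) = _ from st_spec n hn f, h]

/-- spine position -/
noncomputable def fv (hn : 3 ≤ n) : TCV n → ℕ
  | Sum.inl i => 2 * (i : ℕ)
  | Sum.inr e => 2 * (st n hn e : ℕ) + 1

lemma fv_lt (hn : 3 ≤ n) (x : TCV n) : fv n hn x < 2 * n := by
  cases x with
  | inl i => have := i.isLt; simp only [fv]; omega
  | inr e => have := (st n hn e).isLt; simp only [fv]; omega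

lemma fv_inj (hn : 3 ≤ n) : Function.Injective (fv n hn) := by
  intro x y h
  cases x with
  | inl i => cases y with
    | inl j => simp only [fv] at h; exact congrArg Sum.inl (Fin.ext (by omega))
    | inr e => simp only [fv] at h; omega
  | inr e => cases y with
    | inl j => simp only [fv] at h; omega
    | inr f => simp only [fv] at h
               exact congrArg Sum.inr (st_inj n hn e f (Fin.ext (by omega)))

end Graphside

section Adj
variable (n : ℕ)

lemma exists_mem_pair {α : Type*} {A B C D : α} :
    (∃ w, (w = A ∨ w = B) ∧ (w = C ∨ w = D)) ↔ (A = C ∨ A = D ∨ B = C ∨ B = D) := by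
  constructor
  · rintro ⟨w, rfl | rfl, h2 | h2⟩ <;> tauto
  · rintro (h | h | h | h)
    · exact ⟨A, Or.inl rfl, Or.inl h⟩
    · exact ⟨A, Or.inl rfl, Or.inr h⟩
    · exact ⟨B, Or.inr rfl, Or.inl h⟩
    · exact ⟨B, Or.inr rfl, Or.inr h⟩

lemma adj_ll (u v : Fin n) :
    (FGraph .T (cycleG n)).Adj (.inl u) (.inl v) ↔ (cycleG n).Adj u v := by
  show (FOp.T.black = true ∧ (cycleG n).Adj u v) ↔ _
  simp [FOp.black]

lemma adj_le (u : Fin n) (e : (cycleG n).edgeSet) :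
    (FGraph .T (cycleG n)).Adj (.inl u) (.inr e) ↔ u ∈ (e : Sym2 (Fin n)) :=
  Iff.rfl

lemma adj_el (u : Fin n) (e : (cycleG n).edgeSet) :
    (FGraph .T (cycleG n)).Adj (.inr e) (.inl u) ↔ u ∈ (e : Sym2 (Fin n)) :=
  Iff.rfl

lemma adj_ee (e f : (cycleG n).edgeSet) :
    (FGraph .T (cycleG n)).Adj (.inr e) (.inr f) ↔
      (e ≠ f ∧ ∃ w, w ∈ (e : Sym2 (Fin n)) ∧ w ∈ (f : Sym2 (Fin n))) := by
  show (FOp.T.white = true ∧ _ ∧ _) ↔ _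
  simp [FOp.white]

lemma adj_iff (hn : 3 ≤ n) (x y : TCV n) :
    (FGraph .T (cycleG n)).Adj x y ↔ MRel (2*n) (fv n hn x) (fv n hn y) := by
  have hsucc : ∀ s : ℕ, s < n → ((s+1) % n < n ∧ ((s+1) % n = s+1 ∨ (s = n-1 ∧ (s+1) % n = 0))) := by
    intro s hs
    have hy := mod_succ_lt s n (by omega)
    exact ⟨hy, (mod1 s ((s+1)%n) n hs hy).mp rfl⟩
  cases x with
  | inl u =>
    cases y with
    | inl v =>
      rw [adj_ll, cycle_adj_iff n hn]
      simp only [fv]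
      have hu := u.isLt; have hv := v.isLt
      unfold MRel; omega
    | inr e =>
      rw [adj_le, st_spec n hn e, Sym2.mem_iff]
      simp only [fv]
      have hu := u.isLt; have hs := (st n hn e).isLt
      obtain ⟨h1, h2⟩ := hsucc (st n hn e) hs
      rw [Fin.ext_iff, Fin.ext_iff]
      show ((u:ℕ) = _ ∨ (u:ℕ) = ((st n hn e : ℕ)+1) % n) ↔ _
      unfold MRel; omega
  | inr e =>
    cases y with
    | inl v =>
      rw [adj_el, st_spec n hn e, Sym2.mem_iff]
      simp only [fv]
      have hu := v.isLt; have hs := (st n hn e).isLt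
      obtain ⟨h1, h2⟩ := hsucc (st n hn e) hs
      rw [Fin.ext_iff, Fin.ext_iff]
      show ((v:ℕ) = _ ∨ (v:ℕ) = ((st n hn e : ℕ)+1) % n) ↔ _
      unfold MRel; omega
    | inr f =>
      rw [adj_ee]
      have hef : e ≠ f ↔ st n hn e ≠ st n hn f := by
        constructor
        · intro h hc; exact h (st_inj n hn e f hc)
        · intro h hc; exact h (by rw [hc])
      rw [hef, st_spec n hn e, st_spec n hn f]
      simp only [Sym2.mem_iff, fv]
      rw [exists_mem_pair]
      have hs := (st n hn e).isLt; have ht := (st n hn f).isLt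
      obtain ⟨h1, h2⟩ := hsucc (st n hn e) hs
      obtain ⟨h3, h4⟩ := hsucc (st n hn f) ht
      simp only [Ne, Fin.ext_iff, nxt, Fin.val_mk]
      unfold MRel
      omega

end Adj

section Upper
variable (n : ℕ)

noncomputable def pageF (hn : 3 ≤ n) : Sym2 (TCV n) → ℕ :=
  Sym2.lift ⟨fun x y => pg (2*n) (fv n hn x) (fv n hn y),
    fun x y => pg_symm (2*n) (fv n hn x) (fv n hn y)⟩

lemma pageF_mk (hn : 3 ≤ n) (x y : TCV n) :
    pageF n hn s(x, y) = pg (2*n) (fv n hn x) (fv n hn y) := by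
  simp [pageF]

lemma upper_isMBE (hn : 3 ≤ n) :
    IsMBE (FGraph .T (cycleG n)) 5 (fv n hn) (pageF n hn) := by
  have h2 : (2*n) % 2 = 0 := by omega
  have h6 : 6 ≤ 2*n := by omega
  refine ⟨fv_inj n hn, ?_, ?_, ?_⟩
  · intro u v huv
    rw [pageF_mk]
    exact pg_lt5 _ _ _ h2 h6 (fv_lt n hn u) (fv_lt n hn v)
      ((adj_iff n hn u v).mp huv)
  · intro u v x y huv hxy hpg
    rw [pageF_mk, pageF_mk] at hpg
    rintro ⟨o1, o2, o3⟩
    exact key (2*n) _ _ _ _ h2 h6 (fv_lt n hn u) (fv_lt n hn v) (fv_lt n hn x)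
      (fv_lt n hn y) ((adj_iff n hn u v).mp huv) ((adj_iff n hn x y).mp hxy)
      hpg o1 o2 o3
  · intro u v w huv huw hvw
    rw [pageF_mk, pageF_mk]
    exact key2 (2*n) _ _ _ h2 h6 (fv_lt n hn u) (fv_lt n hn v) (fv_lt n hn w)
      ((adj_iff n hn u v).mp huv) ((adj_iff n hn u w).mp huw)
      (fun hc => hvw (fv_inj n hn hc))

lemma mbt_le (hn : 3 ≤ n) : mbt (FGraph .T (cycleG n)) ≤ 5 :=
  Nat.sInf_le ⟨fv n hn, pageF n hn, upper_isMBE n hn⟩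

end Upper

lemma MRel_symm {m a b : ℕ} (h : MRel m a b) : MRel m b a := by
  unfold MRel at *; omega

lemma nbrs (m a : ℕ) (h2 : m % 2 = 0) (h6 : 6 ≤ m) (ha : a < m) :
    ∃ x1 x2 x3 x4 : ℕ, (x1 < m ∧ x2 < m ∧ x3 < m ∧ x4 < m ∧
      x1 ≠ x2 ∧ x1 ≠ x3 ∧ x1 ≠ x4 ∧ x2 ≠ x3 ∧ x2 ≠ x4 ∧ x3 ≠ x4) ∧
      ∀ b, (b < m ∧ MRel m a b) ↔ (b = x1 ∨ b = x2 ∨ b = x3 ∨ b = x4) := by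
  refine ⟨if a+1 < m then a+1 else 0, if 1 ≤ a then a-1 else m-1,
         if a+2 < m then a+2 else a+2-m, if 2 ≤ a then a-2 else m-2+a, ?_, ?_⟩
  · split_ifs <;> omega
  · intro b; unfold MRel; split_ifs <;> omega

lemma even_card_invol {α : Type*} [DecidableEq α] :
    ∀ (N : ℕ) (S : Finset α) (σ : α → α), S.card = N →
    (∀ x ∈ S, σ x ∈ S) → (∀ x ∈ S, σ (σ x) = x) → (∀ x ∈ S, σ x ≠ x) →
    Even S.card := by
  intro N
  induction N using Nat.strong_induction_on with
  | _ N ih =>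
    intro S σ hcard h1 h2 h3
    rcases S.eq_empty_or_nonempty with rfl | ⟨x, hx⟩
    · simp
    · have hxs : σ x ∈ S := h1 x hx
      have hxx : σ x ≠ x := h3 x hx
      set S' := S \ {x, σ x} with hS'def
      have hsub : ({x, σ x} : Finset α) ⊆ S := by
        intro y hy
        rcases Finset.mem_insert.mp hy with rfl | hy
        · exact hx
        · rw [Finset.mem_singleton.mp hy]; exact hxs
      have hpair : ({x, σ x} : Finset α).card = 2 := by
        rw [Finset.card_insert_of_notMem (by simp [Ne.symm hxx]), Finset.card_singleton]
      have hc : S.card = S'.card + 2 := by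
        rw [hS'def, Finset.card_sdiff_of_subset hsub, hpair]
        have := Finset.card_le_card hsub
        omega
      have hmem : ∀ y ∈ S', y ∈ S ∧ y ≠ x ∧ y ≠ σ x := by
        intro y hy
        rw [hS'def, Finset.mem_sdiff] at hy
        refine ⟨hy.1, ?_, ?_⟩ <;> intro hc' <;> apply hy.2 <;> simp [hc']
      have g1 : ∀ y ∈ S', σ y ∈ S' := by
        intro y hy
        obtain ⟨hyS, hy1, hy2⟩ := hmem y hy
        rw [hS'def, Finset.mem_sdiff]
        refine ⟨h1 y hyS, ?_⟩
        simp only [Finset.mem_insert, Finset.mem_singleton]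
        push_neg
        constructor
        · intro hc'; exact hy2 (by rw [← h2 y hyS, hc'])
        · intro hc'
          exact hy1 (by rw [← h2 y hyS, hc', h2 x hx])
      have g2 : ∀ y ∈ S', σ (σ y) = y := fun y hy => h2 y (hmem y hy).1
      have g3 : ∀ y ∈ S', σ y ≠ y := fun y hy => h3 y (hmem y hy).1
      have : Even S'.card := ih S'.card (by omega) S' σ rfl g1 g2 g3
      rw [hc]
      obtain ⟨c, hc2⟩ := this
      exact ⟨c+1, by omega⟩

section Inverse
variable (n : ℕ)

noncomputable def edF (hn : 3 ≤ n) (i : Fin n) : (cycleG n).edgeSet :=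
  ⟨s(i, nxt n hn i), by
    rw [SimpleGraph.mem_edgeSet, cycle_adj_iff n hn]
    have hi := i.isLt
    have h := (mod1 (i : ℕ) (((i : ℕ)+1) % n) n hi (mod_succ_lt _ _ (by omega))).mp rfl
    show ((nxt n hn i : ℕ) = _ ∨ _ ∨ _ ∨ _)
    simp only [nxt, Fin.val_mk]
    omega⟩

lemma st_ed (hn : 3 ≤ n) (i : Fin n) : st n hn (edF n hn i) = i := by
  have h := st_spec n hn (edF n hn i)
  have h2 : s(i, nxt n hn i) = s(st n hn (edF n hn i), nxt n hn (st n hn (edF n hn i))) := h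
  rw [Sym2.eq_iff] at h2
  rcases h2 with ⟨h3, _⟩ | ⟨h3, h4⟩
  · exact h3.symm
  · -- i = nxt st ∧ nxt i = st : contradiction mod n
    exfalso
    set t := st n hn (edF n hn i)
    have hi := i.isLt; have ht := t.isLt
    have e1 : (i : ℕ) = ((t : ℕ)+1) % n := congrArg Fin.val h3
    have e2 : ((i : ℕ)+1) % n = (t : ℕ) := congrArg Fin.val h4
    have c1 := (mod1 (t : ℕ) _ n ht (mod_succ_lt _ _ (by omega))).mp rfl
    have c2 := (mod1 (i : ℕ) _ n hi (mod_succ_lt _ _ (by omega))).mp rfl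
    omega

noncomputable def wfn (hn : 3 ≤ n) (a : ℕ) : TCV n :=
  if a % 2 = 0 then Sum.inl ⟨a/2 % n, Nat.mod_lt _ (by omega)⟩
  else Sum.inr (edF n hn ⟨a/2 % n, Nat.mod_lt _ (by omega)⟩)

lemma fv_wfn (hn : 3 ≤ n) (a : ℕ) (ha : a < 2*n) : fv n hn (wfn n hn a) = a := by
  unfold wfn
  split_ifs with h
  · simp only [fv, Fin.val_mk]
    rw [Nat.mod_eq_of_lt (show a/2 < n by omega)]
    omega
  · simp only [fv, st_ed, Fin.val_mk]
    rw [Nat.mod_eq_of_lt (show a/2 < n by omega)]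
    omega

lemma wfn_fv (hn : 3 ≤ n) (x : TCV n) : wfn n hn (fv n hn x) = x := by
  cases x with
  | inl i =>
    unfold wfn
    rw [if_pos (by simp only [fv]; omega)]
    congr 1
    apply Fin.ext
    have hi := i.isLt
    simp only [fv, Fin.val_mk]
    have h1 : 2 * (i : ℕ) / 2 = (i : ℕ) := by omega
    rw [h1, Nat.mod_eq_of_lt hi]
  | inr e =>
    unfold wfn
    rw [if_neg (by simp only [fv]; omega)]
    congr 1
    have heq : (⟨(fv n hn (Sum.inr e))/2 % n, Nat.mod_lt _ (by omega)⟩ : Fin n) = st n hn e := by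
      apply Fin.ext
      have hst := (st n hn e).isLt
      simp only [fv, Fin.val_mk]
      have h1 : (2 * (st n hn e : ℕ) + 1) / 2 = (st n hn e : ℕ) := by omega
      rw [h1, Nat.mod_eq_of_lt hst]
    rw [heq]
    apply Subtype.ext
    exact (st_spec n hn e).symm

lemma adj_wfn (hn : 3 ≤ n) (a b : ℕ) (ha : a < 2*n) (hb : b < 2*n) :
    (FGraph .T (cycleG n)).Adj (wfn n hn a) (wfn n hn b) ↔ MRel (2*n) a b := by
  rw [adj_iff n hn, fv_wfn n hn a ha, fv_wfn n hn b hb]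

lemma wfn_inj (hn : 3 ≤ n) (a b : ℕ) (ha : a < 2*n) (hb : b < 2*n)
    (h : wfn n hn a = wfn n hn b) : a = b := by
  rw [← fv_wfn n hn a ha, ← fv_wfn n hn b hb, h]

end Inverse

lemma sym2_swap {α : Type*} (a b : α) : s(a, b) = s(b, a) := Sym2.eq_swap

lemma lower_bound (n : ℕ) (hn : 3 ≤ n) (k : ℕ) (f : TCV n → ℕ)
    (page : Sym2 (TCV n) → ℕ) (h : IsMBE (FGraph .T (cycleG n)) k f page) :
    5 ≤ k := by
  obtain ⟨hinj, hlt, hcross, hmatch⟩ := h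
  by_contra hk
  push_neg at hk  -- k < 5
  set m := 2*n with hm
  have h2 : m % 2 = 0 := by omega
  have h6 : 6 ≤ m := by omega
  set W : ℕ → TCV n := wfn n hn with hW
  set g : ℕ → ℕ := fun a => f (W a) with hg
  -- injectivity of g on [0, m)
  have hginj : ∀ a b, a < m → b < m → g a = g b → a = b := by
    intro a b ha hb hab
    exact wfn_inj n hn a b ha hb (hinj hab)
  -- uniqueness of same-page partner
  have huniq : ∀ c d d', c < m → d < m → d' < m → MRel m c d → MRel m c d' →
      page s(W c, W d) = page s(W c, W d') → d = d' := by
    intro c d d' hc hd hd' h1 h1' hpp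
    by_contra hne
    exact hmatch (W c) (W d) (W d') ((adj_wfn n hn c d hc hd).mpr h1)
      ((adj_wfn n hn c d' hc hd').mpr h1')
      (fun hc' => hne (wfn_inj n hn d d' hd hd' hc')) hpp
  -- partner existence
  have hnbr : ∀ a p, ∃ b, (a < m ∧ p < 4) → (b < m ∧ MRel m a b ∧ page s(W a, W b) = p) := by
    intro a p
    by_cases hap : a < m ∧ p < 4
    · obtain ⟨ha, hp⟩ := hap
      obtain ⟨x1, x2, x3, x4, hx, hch⟩ := nbrs m a h2 h6 ha
      have q1 : x1 < m ∧ MRel m a x1 := (hch x1).mpr (by tauto)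
      have q2 : x2 < m ∧ MRel m a x2 := (hch x2).mpr (by tauto)
      have q3 : x3 < m ∧ MRel m a x3 := (hch x3).mpr (by tauto)
      have q4 : x4 < m ∧ MRel m a x4 := (hch x4).mpr (by tauto)
      set p1 := page s(W a, W x1) with hp1
      set p2 := page s(W a, W x2) with hp2
      set p3 := page s(W a, W x3) with hp3
      set p4 := page s(W a, W x4) with hp4
      have hlt1 : p1 < k := hlt _ _ ((adj_wfn n hn a x1 ha q1.1).mpr q1.2)
      have hlt2 : p2 < k := hlt _ _ ((adj_wfn n hn a x2 ha q2.1).mpr q2.2)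
      have hlt3 : p3 < k := hlt _ _ ((adj_wfn n hn a x3 ha q3.1).mpr q3.2)
      have hlt4 : p4 < k := hlt _ _ ((adj_wfn n hn a x4 ha q4.1).mpr q4.2)
      have hd12 : p1 ≠ p2 := fun hc => hx.2.2.2.2.1 (huniq a x1 x2 ha q1.1 q2.1 q1.2 q2.2 hc)
      have hd13 : p1 ≠ p3 := fun hc => hx.2.2.2.2.2.1 (huniq a x1 x3 ha q1.1 q3.1 q1.2 q3.2 hc)
      have hd14 : p1 ≠ p4 := fun hc => hx.2.2.2.2.2.2.1 (huniq a x1 x4 ha q1.1 q4.1 q1.2 q4.2 hc)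
      have hd23 : p2 ≠ p3 := fun hc => hx.2.2.2.2.2.2.2.1 (huniq a x2 x3 ha q2.1 q3.1 q2.2 q3.2 hc)
      have hd24 : p2 ≠ p4 := fun hc => hx.2.2.2.2.2.2.2.2.1 (huniq a x2 x4 ha q2.1 q4.1 q2.2 q4.2 hc)
      have hd34 : p3 ≠ p4 := fun hc => hx.2.2.2.2.2.2.2.2.2 (huniq a x3 x4 ha q3.1 q4.1 q3.2 q4.2 hc)
      have : p = p1 ∨ p = p2 ∨ p = p3 ∨ p = p4 := by omega
      rcases this with rfl | rfl | rfl | rfl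
      · exact ⟨x1, fun _ => ⟨q1.1, q1.2, rfl⟩⟩
      · exact ⟨x2, fun _ => ⟨q2.1, q2.2, rfl⟩⟩
      · exact ⟨x3, fun _ => ⟨q3.1, q3.2, rfl⟩⟩
      · exact ⟨x4, fun _ => ⟨q4.1, q4.2, rfl⟩⟩
    · exact ⟨0, fun hc => absurd hc hap⟩
  choose pt hpt using hnbr
  -- the parity step
  have parure : ∀ a b, a < m → b < m → MRel m a b → g a < g b →
      (((Finset.range m).filter (fun x => g x < g b)).card =
       ((Finset.range m).filter (fun x => g x < g a)).card + 1 +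
       ((Finset.range m).filter (fun x => g a < g x ∧ g x < g b)).card ∧
       Even ((Finset.range m).filter (fun x => g a < g x ∧ g x < g b)).card) := by
    intro a b ha hb hab hgab
    set p := page s(W a, W b) with hp
    have hpk : p < 4 := by
      have := hlt (W a) (W b) ((adj_wfn n hn a b ha hb).mpr hab)
      omega
    set I := (Finset.range m).filter (fun x => g a < g x ∧ g x < g b) with hI
    set σ : ℕ → ℕ := fun x => pt x p with hσ
    -- basic facts about σ on I
    have hIfact : ∀ x, x ∈ I → x < m ∧ g a < g x ∧ g x < g b := by
      intro x hxI
      rw [hI, Finset.mem_filter, Finset.mem_range] at hxI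
      exact ⟨hxI.1, hxI.2⟩
    have hσfact : ∀ x, x ∈ I → σ x < m ∧ MRel m x (σ x) ∧ page s(W x, W (σ x)) = p := by
      intro x hxI
      exact hpt x p ⟨(hIfact x hxI).1, hpk⟩
    have hmemI : ∀ x, x ∈ I → σ x ∈ I := by
      intro x hxI
      obtain ⟨hxm, hgax, hgxb⟩ := hIfact x hxI
      obtain ⟨hsm, hsrel, hspage⟩ := hσfact x hxI
      -- σ x ≠ a
      have hsa : σ x ≠ a := by
        intro hc
        rw [hc] at hspage hsrel
        have hxb : W x ≠ W b := by
          intro hc2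
          have hxb' : x = b := wfn_inj n hn x b hxm hb hc2
          exact lt_irrefl _ (hxb' ▸ hgxb)
        exact hmatch (W a) (W x) (W b)
          ((adj_wfn n hn a x ha hxm).mpr (MRel_symm hsrel))
          ((adj_wfn n hn a b ha hb).mpr hab) hxb
          (by rw [sym2_swap (W a) (W x), hspage])
      have hsb : σ x ≠ b := by
        intro hc
        rw [hc] at hspage hsrel
        have hxa : W x ≠ W a := by
          intro hc2
          have hxa' : x = a := wfn_inj n hn x a hxm ha hc2
          exact lt_irrefl _ (hxa' ▸ hgax)
        exact hmatch (W b) (W x) (W a)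
          ((adj_wfn n hn b x hb hxm).mpr (MRel_symm hsrel))
          ((adj_wfn n hn b a hb ha).mpr (MRel_symm hab)) hxa
          (by rw [sym2_swap (W b) (W x), sym2_swap (W b) (W a), hspage])
      -- now order
      have hga : g (σ x) ≠ g a := fun hc => hsa (hginj _ _ hsm ha hc)
      have hgb : g (σ x) ≠ g b := fun hc => hsb (hginj _ _ hsm hb hc)
      have hadjab := (adj_wfn n hn a b ha hb).mpr hab
      have hadjxs := (adj_wfn n hn x (σ x) hxm hsm).mpr hsrel
      have hc1 : ¬ (g b < g (σ x)) := by
        intro hc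
        exact hcross (W a) (W b) (W x) (W (σ x)) hadjab hadjxs
          (by rw [hspage]) ⟨hgax, hgxb, hc⟩
      have hc2 : ¬ (g (σ x) < g a) := by
        intro hc
        exact hcross (W (σ x)) (W x) (W a) (W b)
          ((adj_wfn n hn (σ x) x hsm hxm).mpr (MRel_symm hsrel)) hadjab
          (by rw [sym2_swap (W (σ x)) (W x), hspage]) ⟨hc, hgax, hgxb⟩
      rw [hI, Finset.mem_filter, Finset.mem_range]
      exact ⟨hsm, by omega, by omega⟩
    have hinvol : ∀ x, x ∈ I → σ (σ x) = x := by
      intro x hxI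
      obtain ⟨hxm, _, _⟩ := hIfact x hxI
      obtain ⟨hsm, hsrel, hspage⟩ := hσfact x hxI
      obtain ⟨hssm, hssrel, hsspage⟩ := hσfact (σ x) (hmemI x hxI)
      exact huniq (σ x) (σ (σ x)) x hsm hssm hxm hssrel (MRel_symm hsrel)
        (by rw [hsspage, sym2_swap (W (σ x)) (W x), hspage])
    have hnofix : ∀ x, x ∈ I → σ x ≠ x := by
      intro x hxI
      obtain ⟨_, hsrel, _⟩ := hσfact x hxI
      exact fun hc => hsrel.1 (by rw [hc])
    have heven : Even I.card := even_card_invol I.card I σ rfl hmemI hinvol hnofix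
    -- the splitting of the filter
    have hsplit : (Finset.range m).filter (fun x => g x < g b) =
        ((Finset.range m).filter (fun x => g x < g a)) ∪ (insert a I) := by
      ext x
      simp only [Finset.mem_filter, Finset.mem_range, Finset.mem_union, Finset.mem_insert, hI]
      constructor
      · rintro ⟨hxm, hxb⟩
        rcases Nat.lt_trichotomy (g x) (g a) with hod | hod | hod
        · exact Or.inl ⟨hxm, hod⟩
        · exact Or.inr (Or.inl (hginj x a hxm ha hod))
        · exact Or.inr (Or.inr ⟨hxm, hod, hxb⟩)
      · rintro (⟨hxm, hxa⟩ | rfl | ⟨hxm, hax, hxb⟩)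
        · exact ⟨hxm, by omega⟩
        · exact ⟨ha, hgab⟩
        · exact ⟨hxm, hxb⟩
    have hdis : Disjoint ((Finset.range m).filter (fun x => g x < g a)) (insert a I) := by
      rw [Finset.disjoint_left]
      intro x hx1 hx2
      rw [Finset.mem_filter, Finset.mem_range] at hx1
      rcases Finset.mem_insert.mp hx2 with rfl | hxI
      · omega
      · have := (hIfact x hxI).2.1
        omega
    have hnomem : a ∉ I := by
      intro hc
      have := (hIfact a hc).2.1
      omega
    rw [hsplit, Finset.card_union_of_disjoint hdis, Finset.card_insert_of_notMem hnomem]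
    exact ⟨by omega, heven⟩
  -- parity coloring
  set rk : ℕ → ℕ := fun a => ((Finset.range m).filter (fun x => g x < g a)).card with hrk
  have hstep : ∀ a b, a < m → b < m → MRel m a b → rk a % 2 ≠ rk b % 2 := by
    intro a b ha hb hab
    rcases Nat.lt_trichotomy (g a) (g b) with hgo | hgo | hgo
    · obtain ⟨hcard, ⟨c, hc⟩⟩ := parure a b ha hb hab hgo
      simp only [hrk]
      omega
    · exact absurd (hginj a b ha hb hgo) hab.1
    · obtain ⟨hcard, ⟨c, hc⟩⟩ := parure b a hb ha (MRel_symm hab) hgo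
      simp only [hrk]
      omega
  -- triangle 0, 1, 2
  have t01 : MRel m 0 1 := by unfold MRel; omega
  have t12 : MRel m 1 2 := by unfold MRel; omega
  have t02 : MRel m 0 2 := by unfold MRel; omega
  have r01 := hstep 0 1 (by omega) (by omega) t01
  have r12 := hstep 1 2 (by omega) (by omega) t12
  have r02 := hstep 0 2 (by omega) (by omega) t02
  omega

lemma deg_eq (n : ℕ) (hn : 3 ≤ n) (v : TCV n) : deg (FGraph .T (cycleG n)) v = 4 := by
  classical
  set m := 2*n with hm
  have h2 : m % 2 = 0 := by omega
  have h6 : 6 ≤ m := by omega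
  set a := fv n hn v with hav
  have ha : a < m := fv_lt n hn v
  obtain ⟨x1, x2, x3, x4, hx, hch⟩ := nbrs m a h2 h6 ha
  set W : ℕ → TCV n := wfn n hn with hW
  have hmem : ∀ xi, xi < m → ∀ x : TCV n, (x = W xi ↔ fv n hn x = xi) := by
    intro xi hxi x
    constructor
    · intro h; rw [h, hW]; exact fv_wfn n hn xi hxi
    · intro h; rw [← h, hW, wfn_fv n hn x]
  have q1 := (hch x1).mpr (by tauto)
  have q2 := (hch x2).mpr (by tauto)
  have q3 := (hch x3).mpr (by tauto)
  have q4 := (hch x4).mpr (by tauto)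
  have hset : (FGraph .T (cycleG n)).neighborSet v =
      ↑({W x1, W x2, W x3, W x4} : Finset (TCV n)) := by
    ext x
    rw [SimpleGraph.mem_neighborSet, adj_iff n hn v x]
    simp only [Finset.coe_insert, Set.mem_insert_iff, Finset.coe_singleton,
      Set.mem_singleton_iff, hmem x1 q1.1 x, hmem x2 q2.1 x, hmem x3 q3.1 x, hmem x4 q4.1 x]
    have hfx := fv_lt n hn x
    rw [← hch (fv n hn x)]
    constructor
    · intro h; exact ⟨hfx, h⟩
    · intro h; exact h.2
  rw [deg, hset, Set.ncard_coe_finset]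
  have w12 : W x1 ≠ W x2 := fun hc => hx.2.2.2.2.1 (wfn_inj n hn _ _ q1.1 q2.1 hc)
  have w13 : W x1 ≠ W x3 := fun hc => hx.2.2.2.2.2.1 (wfn_inj n hn _ _ q1.1 q3.1 hc)
  have w14 : W x1 ≠ W x4 := fun hc => hx.2.2.2.2.2.2.1 (wfn_inj n hn _ _ q1.1 q4.1 hc)
  have w23 : W x2 ≠ W x3 := fun hc => hx.2.2.2.2.2.2.2.1 (wfn_inj n hn _ _ q2.1 q3.1 hc)
  have w24 : W x2 ≠ W x4 := fun hc => hx.2.2.2.2.2.2.2.2.1 (wfn_inj n hn _ _ q2.1 q4.1 hc)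
  have w34 : W x3 ≠ W x4 := fun hc => hx.2.2.2.2.2.2.2.2.2 (wfn_inj n hn _ _ q3.1 q4.1 hc)
  rw [Finset.card_insert_of_notMem (by simp [w12, w13, w14]),
      Finset.card_insert_of_notMem (by simp [w23, w24]),
      Finset.card_insert_of_notMem (by simp [w34]),
      Finset.card_singleton]

lemma maxdeg_eq (n : ℕ) (hn : 3 ≤ n) : maxDeg (FGraph .T (cycleG n)) = 4 := by
  unfold maxDeg
  apply le_antisymm
  · exact Finset.sup_le (fun v _ => le_of_eq (deg_eq n hn v))
  · calc (4 : ℕ) = deg (FGraph .T (cycleG n)) (Sum.inl ⟨0, by omega⟩) :=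
        (deg_eq n hn (Sum.inl ⟨0, by omega⟩)).symm
    _ ≤ _ := Finset.le_sup (Finset.mem_univ _)


/-- For every `n ≥ 3`, the total graph `T(C_n)` is nearly dispersable:
`mbt(T(C_n)) = Δ(T(C_n)) + 1 = 5`. -/
theorem T_cycle_nearly_dispersable (n : ℕ) (hn : 3 ≤ n) :
    mbt (FGraph .T (cycleG n)) = maxDeg (FGraph .T (cycleG n)) + 1 ∧
      maxDeg (FGraph .T (cycleG n)) + 1 = 5 := by
  have hmax : maxDeg (FGraph .T (cycleG n)) = 4 := maxdeg_eq n hn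
  have hub : mbt (FGraph .T (cycleG n)) ≤ 5 := mbt_le n hn
  have hlb : 5 ≤ mbt (FGraph .T (cycleG n)) := by
    have h5 : 5 ∈ {k | ∃ f page, IsMBE (FGraph .T (cycleG n)) k f page} :=
      ⟨fv n hn, pageF n hn, upper_isMBE n hn⟩
    unfold mbt
    apply le_csInf ⟨5, h5⟩
    rintro k ⟨f, page, hk⟩
    exact lower_bound n hn k f page hk
  omega
end

section
/- For every n ≥ 1, the graph Q(S_n) obtained from the star S_n = K_{1,n} is dispersable, with mbt(Q(S_n)) = Δ(Q(S_n)) = n + 1. -/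
open SimpleGraph

namespace QStarAux

variable {n : ℕ}

/-- Sum of the two endpoint values of an unordered pair. -/
def sv {n : ℕ} : Sym2 (Fin (n+1)) → ℕ :=
  Sym2.lift ⟨fun a b => (a : ℕ) + b, fun a b => Nat.add_comm _ _⟩

@[simp] lemma sv_mk (a b : Fin (n+1)) : sv s(a,b) = (a:ℕ) + b := rfl

abbrev Γ (n : ℕ) : SimpleGraph (Fin (n+1) ⊕ (starG n).edgeSet) := FGraph .Q (starG n)

def gg {n : ℕ} : Fin (n+1) ⊕ (starG n).edgeSet → ℕ
  | Sum.inl v => v.val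
  | Sum.inr e => sv (e : Sym2 (Fin (n+1)))

def ff {n : ℕ} : Fin (n+1) ⊕ (starG n).edgeSet → ℕ
  | Sum.inl v => 2 * v.val
  | Sum.inr e => 2 * sv (e : Sym2 (Fin (n+1))) - 1

def pg {n : ℕ} : Sym2 (Fin (n+1) ⊕ (starG n).edgeSet) → ℕ :=
  Sym2.lift ⟨fun x y => (gg x + gg y) % (n+1), fun x y => by simp [Nat.add_comm]⟩

@[simp] lemma pg_mk (x y : Fin (n+1) ⊕ (starG n).edgeSet) :
    pg s(x,y) = (gg x + gg y) % (n+1) := rfl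

lemma edge_struct (e : (starG n).edgeSet) :
    ∃ i : Fin (n+1), 1 ≤ (i:ℕ) ∧ (e : Sym2 (Fin (n+1))) = s(0, i) ∧ sv (e : Sym2 (Fin (n+1))) = (i:ℕ) := by
  obtain ⟨e, he⟩ := e
  induction e using Sym2.ind with
  | _ a b =>
    rw [SimpleGraph.mem_edgeSet] at he
    obtain ⟨hab, h0⟩ := he
    rcases h0 with h | h
    · subst h
      have hb : (b : ℕ) ≠ 0 := by
        intro hb
        exact hab (Fin.ext (by simp [hb])).symm |>.elim
      exact ⟨b, by omega, rfl, by simp⟩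
    · subst h
      have ha : (a : ℕ) ≠ 0 := by
        intro ha
        exact hab (Fin.ext (by simp [ha]))
      exact ⟨a, by omega, Sym2.eq_swap, by simp⟩

lemma sv_pos (e : (starG n).edgeSet) : 1 ≤ sv (e : Sym2 (Fin (n+1))) := by
  obtain ⟨i, h1, -, hs⟩ := edge_struct e; omega

lemma sv_le (e : (starG n).edgeSet) : sv (e : Sym2 (Fin (n+1))) ≤ n := by
  obtain ⟨i, -, -, hs⟩ := edge_struct e
  have := i.isLt; omega

lemma sv_inj {e f : (starG n).edgeSet} (h : sv (e : Sym2 (Fin (n+1))) = sv (f : Sym2 (Fin (n+1)))) : e = f := by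
  obtain ⟨i, -, hie, his⟩ := edge_struct e
  obtain ⟨j, -, hje, hjs⟩ := edge_struct f
  have hij : i = j := Fin.ext (by omega)
  exact Subtype.ext (by rw [hie, hje, hij])

lemma mem_iff (e : (starG n).edgeSet) {a : Fin (n+1)} :
    a ∈ (e : Sym2 (Fin (n+1))) ↔ a = 0 ∨ (a:ℕ) = sv (e : Sym2 (Fin (n+1))) := by
  obtain ⟨i, -, hrep, hsv⟩ := edge_struct e
  rw [hrep, Sym2.mem_iff]
  simp only [sv_mk, Fin.val_zero, Nat.zero_add, Fin.ext_iff]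

lemma mem0 (e : (starG n).edgeSet) : (0 : Fin (n+1)) ∈ (e : Sym2 (Fin (n+1))) :=
  (mem_iff e).mpr (Or.inl rfl)

lemma adj_inl_inl {a b : Fin (n+1)} : ¬ (Γ n).Adj (Sum.inl a) (Sum.inl b) := by
  intro h
  exact absurd h.1 (by simp [FOp.black])

lemma adj_inl_inr {a : Fin (n+1)} {e : (starG n).edgeSet} :
    (Γ n).Adj (Sum.inl a) (Sum.inr e) ↔ a ∈ (e : Sym2 (Fin (n+1))) := Iff.rfl

lemma adj_inr_inl {a : Fin (n+1)} {e : (starG n).edgeSet} :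
    (Γ n).Adj (Sum.inr e) (Sum.inl a) ↔ a ∈ (e : Sym2 (Fin (n+1))) := Iff.rfl

lemma adj_inr_inr {e f : (starG n).edgeSet} :
    (Γ n).Adj (Sum.inr e) (Sum.inr f) ↔ e ≠ f := by
  constructor
  · exact fun h => h.2.1
  · exact fun h => ⟨rfl, h, 0, mem0 e, mem0 f⟩

lemma gg_le (z : Fin (n+1) ⊕ (starG n).edgeSet) : gg z ≤ n := by
  cases z with
  | inl a => have := a.isLt; simp only [gg]; omega
  | inr e => exact sv_le e

lemma ff_lt_gg_le {z w : Fin (n+1) ⊕ (starG n).edgeSet} (h : ff z < ff w) : gg z ≤ gg w := by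
  cases z <;> cases w <;>
    simp only [ff, gg] at h ⊢ <;>
    first
      | omega
      | (rename_i e _; have := sv_pos e; omega)
      | (rename_i e; have := sv_pos e; omega)

lemma geq_inl {z w : Fin (n+1) ⊕ (starG n).edgeSet} (hf : ff z < ff w) (hg : gg z = gg w) :
    ∃ a : Fin (n+1), w = Sum.inl a := by
  cases z with
  | inl a =>
    cases w with
    | inl b => exact ⟨b, rfl⟩
    | inr e =>
      simp only [ff, gg] at hf hg
      have := sv_pos e; omega
  | inr e =>
    cases w with
    | inl b => exact ⟨b, rfl⟩
    | inr f =>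
      simp only [ff, gg] at hf hg
      exact absurd (sv_inj hg) (by rintro rfl; omega)

lemma key {u : Fin (n+1) ⊕ (starG n).edgeSet} {a : Fin (n+1)} {e : (starG n).edgeSet}
    (h1 : (Γ n).Adj u (Sum.inl a)) (h2 : (Γ n).Adj u (Sum.inr e))
    (h : (a : ℕ) = sv (e : Sym2 (Fin (n+1)))) : False := by
  cases u with
  | inl b => exact adj_inl_inl h1
  | inr e' =>
    have ha : a ∈ (e' : Sym2 _) := adj_inr_inl.mp h1
    have hne : e' ≠ e := adj_inr_inr.mp h2
    have hp := sv_pos e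
    rcases (mem_iff e').mp ha with h0 | hs
    · subst h0; simp at h; omega
    · exact hne (sv_inj (by omega))

lemma gg_injOn (u : Fin (n+1) ⊕ (starG n).edgeSet) :
    Set.InjOn gg ((Γ n).neighborSet u) := by
  intro v hv w hw hg
  rw [SimpleGraph.mem_neighborSet] at hv hw
  cases v with
  | inl a =>
    cases w with
    | inl b => exact congrArg Sum.inl (Fin.ext hg)
    | inr e => exact (key hv hw hg).elim
  | inr e =>
    cases w with
    | inl b => exact (key hw hv hg.symm).elim
    | inr f => exact congrArg Sum.inr (sv_inj hg)

lemma construction (n : ℕ) : IsMBE (Γ n) (n+1) ff pg := by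
  refine ⟨?_, ?_, ?_, ?_⟩
  · -- injectivity of ff
    intro z w h
    cases z with
    | inl a =>
      cases w with
      | inl b =>
        simp only [ff] at h
        exact congrArg Sum.inl (Fin.ext (by omega))
      | inr e => simp only [ff] at h; have := sv_pos e; omega
    | inr e =>
      cases w with
      | inl b => simp only [ff] at h; have := sv_pos e; omega
      | inr f =>
        simp only [ff] at h
        have h1 := sv_pos e; have h2 := sv_pos f
        exact congrArg Sum.inr (sv_inj (by omega))
  · intro u v _
    exact Nat.mod_lt _ (by omega)
  · rintro u v x y huv hxy hpg ⟨h1, h2, h3⟩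
    have hA : gg u ≤ gg x := ff_lt_gg_le h1
    have hB : gg x ≤ gg v := ff_lt_gg_le h2
    have hC : gg v ≤ gg y := ff_lt_gg_le h3
    have hgu := gg_le u; have hgv := gg_le v; have hgx := gg_le x; have hgy := gg_le y
    simp only [pg_mk] at hpg
    have hdvd : (n+1) ∣ (gg x + gg y) - (gg u + gg v) :=
      (Nat.modEq_iff_dvd' (by omega)).mp hpg
    obtain ⟨c, hc⟩ := hdvd
    have hlt : gg x + gg y - (gg u + gg v) < n + 1 := by omega
    have hc0 : c = 0 := by
      by_contra hc0
      have : n + 1 ≤ (n + 1) * c := Nat.le_mul_of_pos_right _ (Nat.pos_of_ne_zero hc0)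
      omega
    subst hc0
    rw [Nat.mul_zero] at hc
    have hux : gg u = gg x := by omega
    have hvy : gg v = gg y := by omega
    obtain ⟨a, rfl⟩ := geq_inl h1 hux
    obtain ⟨b, rfl⟩ := geq_inl h3 hvy
    exact adj_inl_inl hxy
  · intro u v w huv huw hvw hpg
    simp only [pg_mk] at hpg
    have h1 := gg_le v; have h2 := gg_le w; have h3 := gg_le u
    have : gg v = gg w := by
      have := (Nat.ModEq.add_left_cancel' (gg u) hpg)
      have hv := Nat.mod_eq_of_lt (show gg v < n+1 by omega)
      have hw := Nat.mod_eq_of_lt (show gg w < n+1 by omega)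
      unfold Nat.ModEq at this; omega
    exact hvw (gg_injOn u huv huw this)


lemma image_nbr (e : (starG n).edgeSet) :
    gg '' ((Γ n).neighborSet (Sum.inr e)) = Set.Iic n := by
  apply Set.Subset.antisymm
  · rintro j ⟨z, -, rfl⟩; exact gg_le z
  · intro j hj
    simp only [Set.mem_Iic] at hj
    by_cases h0 : j = 0
    · exact ⟨Sum.inl 0, adj_inr_inl.mpr (mem0 e), by simp [gg, h0]⟩
    · by_cases hse : j = sv (e : Sym2 (Fin (n+1)))
      · exact ⟨Sum.inl ⟨j, by omega⟩,
          adj_inr_inl.mpr ((mem_iff e).mpr (Or.inr (by simp [hse]))), by simp [gg]⟩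
      · have hadj : (starG n).Adj 0 ⟨j, by omega⟩ := by
          refine ⟨?_, Or.inl rfl⟩
          intro h
          have := congrArg Fin.val h
          simp at this; omega
        refine ⟨Sum.inr ⟨s(0, ⟨j, by omega⟩), hadj⟩, adj_inr_inr.mpr ?_, ?_⟩
        · intro h
          apply hse
          rw [h]
          simp [sv]
        · simp [gg, sv]

lemma deg_le (z : Fin (n+1) ⊕ (starG n).edgeSet) : deg (Γ n) z ≤ n + 1 := by
  unfold deg
  rw [← Set.ncard_image_of_injOn (gg_injOn z)]
  have hsub : gg '' ((Γ n).neighborSet z) ⊆ Set.Iic n := by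
    rintro j ⟨w, -, rfl⟩; exact gg_le w
  calc (gg '' ((Γ n).neighborSet z)).ncard ≤ (Set.Iic n).ncard :=
        Set.ncard_le_ncard hsub (Set.finite_Iic n)
    _ = n + 1 := by rw [← Finset.coe_Iic, Set.ncard_coe_finset, Nat.card_Iic]

lemma deg_inr (e : (starG n).edgeSet) : deg (Γ n) (Sum.inr e) = n + 1 := by
  unfold deg
  rw [← Set.ncard_image_of_injOn (gg_injOn _), image_nbr,
    ← Finset.coe_Iic, Set.ncard_coe_finset, Nat.card_Iic]

lemma deg_bound {k : ℕ} {f : Fin (n+1) ⊕ (starG n).edgeSet → ℕ}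
    {page : Sym2 (Fin (n+1) ⊕ (starG n).edgeSet) → ℕ}
    (h : IsMBE (Γ n) k f page) (u : Fin (n+1) ⊕ (starG n).edgeSet) :
    deg (Γ n) u ≤ k := by
  obtain ⟨-, h2, -, h4⟩ := h
  have hinj : Set.InjOn (fun v => page s(u, v)) ((Γ n).neighborSet u) := by
    intro v hv w hw hp
    by_contra hne
    exact h4 u v w hv hw hne hp
  unfold deg
  rw [← Set.ncard_image_of_injOn hinj]
  have hsub : (fun v => page s(u,v)) '' ((Γ n).neighborSet u) ⊆ Set.Iio k := by
    rintro j ⟨w, hw, rfl⟩; exact h2 u w hw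
  calc ((fun v => page s(u,v)) '' ((Γ n).neighborSet u)).ncard ≤ (Set.Iio k).ncard :=
        Set.ncard_le_ncard hsub (Set.finite_Iio k)
    _ = k := by rw [← Finset.coe_range, Set.ncard_coe_finset, Finset.card_range]

end QStarAux
/-- For every `n ≥ 1`, the graph `Q(S_n)` obtained from the star
`S_n = K_{1,n}` is dispersable, with `mbt(Q(S_n)) = Δ(Q(S_n)) = n + 1`. -/
theorem Q_star_dispersable (n : ℕ) (hn : 1 ≤ n) :
    mbt (FGraph .Q (starG n)) = maxDeg (FGraph .Q (starG n)) ∧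
      maxDeg (FGraph .Q (starG n)) = n + 1 := by
  have hne01 : (0 : Fin (n+1)) ≠ 1 := by
    intro h
    have := congrArg Fin.val h
    simp [Fin.val_one'] at this
    omega
  have hadj : (starG n).Adj 0 1 := ⟨hne01, Or.inl rfl⟩
  set e₀ : (starG n).edgeSet := ⟨s(0,1), hadj⟩ with he₀
  have hmax : maxDeg (FGraph .Q (starG n)) = n + 1 := by
    apply le_antisymm
    · exact Finset.sup_le (fun z _ => QStarAux.deg_le z)
    · calc n + 1 = deg (QStarAux.Γ n) (Sum.inr e₀) := (QStarAux.deg_inr e₀).symm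
        _ ≤ _ := Finset.le_sup (Finset.mem_univ _)
  have hmbt : mbt (FGraph .Q (starG n)) = n + 1 := by
    have hmem : n + 1 ∈ {k | ∃ f page, IsMBE (QStarAux.Γ n) k f page} :=
      ⟨_, _, QStarAux.construction n⟩
    have hlb : ∀ k ∈ {k | ∃ f page, IsMBE (QStarAux.Γ n) k f page}, n + 1 ≤ k := by
      rintro k ⟨f, page, h⟩
      have := QStarAux.deg_bound h (Sum.inr e₀)
      rwa [QStarAux.deg_inr] at this
    exact le_antisymm (Nat.sInf_le hmem) (hlb _ (Nat.sInf_mem ⟨_, hmem⟩))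
  exact ⟨by rw [hmbt, hmax], hmax⟩
end

section
/- Let F ∈ {S, R, Q, T}, let G be any finite simple graph, and let H be any finite dispersable bipartite graph (H is bipartite and mbt(H) = Δ(H)). Then mbt(G +_F H) ≤ mbt(F(G)) + Δ(H). -/
open SimpleGraph

private lemma block_le {N q q' r r' : ℕ} (hr' : r' ≤ N)
    (h : q * (N + 1) + r ≤ q' * (N + 1) + r') : q ≤ q' := by
  by_contra hc
  push_neg at hc
  have h2 : (q' + 1) * (N + 1) ≤ q * (N + 1) := Nat.mul_le_mul_right _ hc
  have h3 : (q' + 1) * (N + 1) = q' * (N + 1) + (N + 1) := by ring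
  set A := q * (N + 1)
  set B := q' * (N + 1)
  set Cc := (q' + 1) * (N + 1)
  omega

private lemma exists_isMBE {V : Type*} [Finite V] (G : SimpleGraph V) :
    ∃ f page, IsMBE G (mbt G) f page := by
  classical
  have hne : {k | ∃ f page, IsMBE G k f page}.Nonempty := by
    obtain ⟨f, hf⟩ := Countable.exists_injective_nat V
    obtain ⟨p, hp⟩ := Countable.exists_injective_nat (Sym2 V)
    haveI := Fintype.ofFinite (Sym2 V)
    refine ⟨Finset.univ.sup p + 1, f, p, hf, ?_, ?_, ?_⟩
    · intro u v _
      exact Nat.lt_succ_of_le (Finset.le_sup (Finset.mem_univ _))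
    · intro u v x y huv hxy hpage
      rintro ⟨h1, h2, h3⟩
      have h := hp hpage
      rw [Sym2.eq_iff] at h
      rcases h with ⟨h4, h5⟩ | ⟨h4, h5⟩ <;> subst h4 <;> subst h5 <;> omega
    · intro u v w huv huw hvw hpage
      have h := hp hpage
      rw [Sym2.eq_iff] at h
      rcases h with ⟨-, h5⟩ | ⟨h4, h5⟩
      · exact hvw h5
      · exact G.loopless.irrefl u (h5 ▸ huv)
  exact Nat.sInf_mem hne

/-- For every `F ∈ {S, R, Q, T}`, every finite simple graph `G`, and every
finite dispersable bipartite graph `H`, `mbt(G +_F H) ≤ mbt(F(G)) + Δ(H)`. -/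
theorem mbt_FSum_le (F : FOp) {V W : Type*} [Fintype V] [DecidableEq V] [Fintype W]
    (G : SimpleGraph V) [DecidableRel G.Adj] (H : SimpleGraph W)
    (hbip : H.Colorable 2) (hdisp : mbt H = maxDeg H) :
    mbt (FSum F G H) ≤ mbt (FGraph F G) + maxDeg H := by
  classical
  obtain ⟨fF, pF, hFinj, hFpage, hFcross, hFmatch⟩ := exists_isMBE (FGraph F G)
  have hH := exists_isMBE H
  rw [hdisp] at hH
  obtain ⟨fH, pH, hHinj, hHpage, hHcross, hHmatch⟩ := hH
  set k := mbt (FGraph F G) with hk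
  set d := maxDeg H with hd
  obtain ⟨C⟩ := hbip
  haveI : Fintype (V ⊕ G.edgeSet) := Fintype.ofFinite _
  set N := Finset.univ.sup fF with hNdef
  have hNle : ∀ x : V ⊕ G.edgeSet, fF x ≤ N := fun x => Finset.le_sup (Finset.mem_univ x)
  set r : (V ⊕ G.edgeSet) × W → ℕ :=
    fun a => if C a.2 = 0 then fF a.1 else N - fF a.1 with hr
  set pos : (V ⊕ G.edgeSet) × W → ℕ := fun a => fH a.2 * (N + 1) + r a with hpos
  have hrN : ∀ a, r a ≤ N := by
    intro a
    simp only [hr]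
    split
    · exact hNle a.1
    · omega
  have hble : ∀ a b, pos a ≤ pos b → fH a.2 ≤ fH b.2 := by
    intro a b h
    simp only [hpos] at h
    exact block_le (hrN b) h
  have hrlt : ∀ a b, a.2 = b.2 → pos a < pos b → r a < r b := by
    intro a b h2 h
    simp only [hpos] at h
    rw [h2] at h
    exact Nat.lt_of_add_lt_add_left h
  have hposinj : Function.Injective pos := by
    intro a b h
    have e1 : fH a.2 ≤ fH b.2 := hble a b h.le
    have e2 : fH b.2 ≤ fH a.2 := hble b a h.ge
    have ew : a.2 = b.2 := hHinj (le_antisymm e1 e2)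
    have er : r a = r b := by
      simp only [hpos] at h
      rw [ew] at h
      exact Nat.add_left_cancel h
    have ex : fF a.1 = fF b.1 := by
      simp only [hr] at er
      rw [ew] at er
      have := hNle a.1
      have := hNle b.1
      split at er
      · exact er
      · omega
    exact Prod.ext (hFinj ex) ew
  set pg : Sym2 ((V ⊕ G.edgeSet) × W) → ℕ := Sym2.lift
    ⟨fun a b => if a.2 = b.2 then pF s(a.1, b.1) else k + pH s(a.2, b.2), by
      intro a b
      dsimp only
      by_cases h : a.2 = b.2
      · rw [if_pos h, if_pos h.symm, Sym2.eq_swap]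
      · rw [if_neg h, if_neg (Ne.symm h), Sym2.eq_swap]⟩ with hpg
  have hpgeq : ∀ a b : (V ⊕ G.edgeSet) × W, pg s(a, b) =
      if a.2 = b.2 then pF s(a.1, b.1) else k + pH s(a.2, b.2) := by
    intro a b
    rw [hpg, Sym2.lift_mk]
  have hmem : k + d ∈ {n | ∃ f page, IsMBE (FSum F G H) n f page} := by
    refine ⟨pos, pg, hposinj, ?_, ?_, ?_⟩
    · -- page bound
      intro a b hab'
      have hab : (a.1 = b.1 ∧ (∃ u, a.1 = Sum.inl u) ∧ H.Adj a.2 b.2) ∨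
          (a.2 = b.2 ∧ (FGraph F G).Adj a.1 b.1) := hab'
      rcases hab with ⟨-, -, h3⟩ | ⟨h1, h2⟩
      · rw [hpgeq, if_neg h3.ne]
        have := hHpage a.2 b.2 h3
        omega
      · rw [hpgeq, if_pos h1]
        have := hFpage a.1 b.1 h2
        omega
    · -- no crossings
      intro a b c d hab' hcd' hpage
      rintro ⟨p1, p2, p3⟩
      have hab : (a.1 = b.1 ∧ (∃ u, a.1 = Sum.inl u) ∧ H.Adj a.2 b.2) ∨
          (a.2 = b.2 ∧ (FGraph F G).Adj a.1 b.1) := hab'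
      have hcd : (c.1 = d.1 ∧ (∃ u, c.1 = Sum.inl u) ∧ H.Adj c.2 d.2) ∨
          (c.2 = d.2 ∧ (FGraph F G).Adj c.1 d.1) := hcd'
      rcases hab with ⟨hab1, -, hab3⟩ | ⟨hab1, hab2⟩ <;>
        rcases hcd with ⟨hcd1, -, hcd3⟩ | ⟨hcd1, hcd2⟩
      · -- both H-type edges
        rw [hpgeq, hpgeq, if_neg hab3.ne, if_neg hcd3.ne] at hpage
        have hpH : pH s(a.2, b.2) = pH s(c.2, d.2) := by omega
        have e1 : fH a.2 ≤ fH c.2 := hble a c p1.le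
        have e2 : fH c.2 ≤ fH b.2 := hble c b p2.le
        have e3 : fH b.2 ≤ fH d.2 := hble b d p3.le
        by_cases hac : a.2 = c.2
        · by_cases hbd : b.2 = d.2
          · -- two copies of the same page over shared blocks: bipartite argument
            have r1 : r a < r c := hrlt a c hac p1
            have r2 : r b < r d := hrlt b d hbd p3
            have hcol : C a.2 ≠ C b.2 := C.valid hab3
            have hcol' : C c.2 ≠ C d.2 := by rw [← hac, ← hbd]; exact hcol
            have eab : fF a.1 = fF b.1 := congrArg fF hab1
            have ecd : fF c.1 = fF d.1 := congrArg fF hcd1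
            have hNa := hNle a.1
            have hNb := hNle b.1
            have hNc := hNle c.1
            have hNd := hNle d.1
            simp only [hr] at r1 r2
            rw [hac] at r1
            rw [hbd] at r2
            by_cases h0 : C c.2 = 0
            · have h1 : C d.2 ≠ 0 := fun h => hcol' (h0.trans h.symm)
              simp only [if_pos h0] at r1
              simp only [if_neg h1] at r2
              omega
            · have h1 : C d.2 = 0 := by
                have htwo : ∀ i : Fin 2, i = 0 ∨ i = 1 := by decide
                have hc1 : C c.2 = 1 := by
                  rcases htwo (C c.2) with h | h
                  · exact absurd h h0
                  · exact h
                rcases htwo (C d.2) with h | h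
                · exact h
                · exact absurd (hc1.trans h.symm) hcol'
              simp only [if_neg h0] at r1
              simp only [if_pos h1] at r2
              omega
          · -- edges share the block of a.2 = c.2 : matching in H
            have hadj : H.Adj a.2 d.2 := by rw [hac]; exact hcd3
            have hne := hHmatch a.2 b.2 d.2 hab3 hadj hbd
            rw [show s(a.2, d.2) = s(c.2, d.2) by rw [hac]] at hne
            exact hne hpH
        · by_cases hcb : c.2 = b.2
          · by_cases had : a.2 = d.2
            · have h1 : fH a.2 ≤ fH b.2 := by rw [← hcb]; exact e1
              have h2 : fH b.2 ≤ fH a.2 := by rw [had]; exact e3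
              exact hab3.ne (hHinj (le_antisymm h1 h2))
            · have h1 : H.Adj b.2 a.2 := hab3.symm
              have h2 : H.Adj b.2 d.2 := by rw [← hcb]; exact hcd3
              have hne := hHmatch b.2 a.2 d.2 h1 h2 had
              rw [show s(b.2, a.2) = s(a.2, b.2) from Sym2.eq_swap,
                  show s(b.2, d.2) = s(c.2, d.2) by rw [hcb]] at hne
              exact hne hpH
          · by_cases hbd : b.2 = d.2
            · have h1 : H.Adj b.2 a.2 := hab3.symm
              have h2 : H.Adj b.2 c.2 := by rw [hbd]; exact hcd3.symm
              have hne := hHmatch b.2 a.2 c.2 h1 h2 hac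
              rw [show s(b.2, a.2) = s(a.2, b.2) from Sym2.eq_swap,
                  show s(b.2, c.2) = s(c.2, d.2) by rw [← hbd, Sym2.eq_swap]] at hne
              exact hne hpH
            · have s1 : fH a.2 < fH c.2 := lt_of_le_of_ne e1 (fun h => hac (hHinj h))
              have s2 : fH c.2 < fH b.2 := lt_of_le_of_ne e2 (fun h => hcb (hHinj h))
              have s3 : fH b.2 < fH d.2 := lt_of_le_of_ne e3 (fun h => hbd (hHinj h))
              exact hHcross a.2 b.2 c.2 d.2 hab3 hcd3 hpH ⟨s1, s2, s3⟩
      · -- H-type and F-type : pages are in disjoint ranges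
        rw [hpgeq, hpgeq, if_neg hab3.ne, if_pos hcd1] at hpage
        have := hFpage c.1 d.1 hcd2
        omega
      · rw [hpgeq, hpgeq, if_pos hab1, if_neg hcd3.ne] at hpage
        have := hFpage a.1 b.1 hab2
        omega
      · -- both F-type edges
        rw [hpgeq, hpgeq, if_pos hab1, if_pos hcd1] at hpage
        have e1 : fH a.2 ≤ fH c.2 := hble a c p1.le
        have e2 : fH c.2 ≤ fH a.2 := by
          have := hble c b p2.le
          rw [hab1]; exact this
        have hac : a.2 = c.2 := hHinj (le_antisymm e1 e2)
        have r1 : r a < r c := hrlt a c hac p1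
        have r2 : r c < r b := hrlt c b (hac.symm.trans hab1) p2
        have r3 : r b < r d := hrlt b d (hab1.symm.trans (hac.trans hcd1)) p3
        have hNa := hNle a.1
        have hNb := hNle b.1
        have hNc := hNle c.1
        have hNd := hNle d.1
        simp only [hr] at r1 r2 r3
        rw [← hac] at r1 r2
        rw [← hab1] at r2 r3
        rw [← (hac.trans hcd1)] at r3
        -- now all conditions are `C a.2 = 0`
        by_cases h0 : C a.2 = 0
        · simp only [if_pos h0] at r1 r2 r3
          exact hFcross a.1 b.1 c.1 d.1 hab2 hcd2 hpage ⟨r1, r2, r3⟩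
        · simp only [if_neg h0] at r1 r2 r3
          have hpage' : pF s(d.1, c.1) = pF s(b.1, a.1) := by
            rw [show s(d.1, c.1) = s(c.1, d.1) from Sym2.eq_swap,
                show s(b.1, a.1) = s(a.1, b.1) from Sym2.eq_swap]
            exact hpage.symm
          exact hFcross d.1 c.1 b.1 a.1 hcd2.symm hab2.symm hpage'
            ⟨by omega, by omega, by omega⟩
    · -- matching condition
      intro a b c hab' hac' hbc
      have hab : (a.1 = b.1 ∧ (∃ u, a.1 = Sum.inl u) ∧ H.Adj a.2 b.2) ∨
          (a.2 = b.2 ∧ (FGraph F G).Adj a.1 b.1) := hab'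
      have hac : (a.1 = c.1 ∧ (∃ u, a.1 = Sum.inl u) ∧ H.Adj a.2 c.2) ∨
          (a.2 = c.2 ∧ (FGraph F G).Adj a.1 c.1) := hac'
      rcases hab with ⟨hab1, -, hab3⟩ | ⟨hab1, hab2⟩ <;>
        rcases hac with ⟨hac1, -, hac3⟩ | ⟨hac1, hac2⟩
      · rw [hpgeq, hpgeq, if_neg hab3.ne, if_neg hac3.ne]
        have hbc2 : b.2 ≠ c.2 := by
          intro h
          exact hbc (Prod.ext (hab1.symm.trans hac1) h)
        have := hHmatch a.2 b.2 c.2 hab3 hac3 hbc2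
        omega
      · rw [hpgeq, hpgeq, if_neg hab3.ne, if_pos hac1]
        have := hFpage a.1 c.1 hac2
        omega
      · rw [hpgeq, hpgeq, if_pos hab1, if_neg hac3.ne]
        have := hFpage a.1 b.1 hab2
        omega
      · rw [hpgeq, hpgeq, if_pos hab1, if_pos hac1]
        have hbc1 : b.1 ≠ c.1 := by
          intro h
          exact hbc (Prod.ext h (hab1.symm.trans hac1))
        exact hFmatch a.1 b.1 c.1 hab2 hac2 hbc1
  exact Nat.sInf_le hmem
end
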